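/- arXiv:2205.06857 — 5 statements merged into one kernel-verified Lean document; each statement's English description precedes it below -/
import Mathlib

section
/- In the depth-2 gerrymandering instance constructed from a Set Cover instance (U,F,t) in which every element belongs to exactly d ≥ 3 sets: if D is a set of vertices of G not containing the root r such that the induced subgraph G[D] is connected and the preferred candidate p wins D, then D = {w_i} for some i ∈ [d]. -/
attribute [local instance] Classical.propDecidable

/-- Candidate `c` *leads* district `D` (unweighted): `c`'s vote count is at least that of
every candidate. -/
def leadsIn {V C : Type*} (χ : V → C) (c : C) (D : Finset V) : Prop :=
  ∀ c' : C, (D.filter fun x => χ x = c').card ≤ (D.filter fun x => χ x = c).card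

/-- Candidate `c` *wins* district `D` (unweighted): `c`'s vote count strictly exceeds that of
every other candidate. -/
def winsIn {V C : Type*} (χ : V → C) (c : C) (D : Finset V) : Prop :=
  ∀ c' : C, c' ≠ c → (D.filter fun x => χ x = c').card < (D.filter fun x => χ x = c).card

/-- A district-partition of `G` into `k` districts: `k` pairwise-disjoint nonempty vertex sets
covering all vertices, each inducing a connected subgraph. -/
def IsDistrictPartition {V : Type*} (G : SimpleGraph V) (k : ℕ) (P : Finset (Finset V)) : Prop :=
  P.card = k ∧ (∀ D ∈ P, D.Nonempty) ∧
    (∀ D ∈ P, ∀ D' ∈ P, D ≠ D' → Disjoint D D') ∧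
    (∀ x : V, ∃ D ∈ P, x ∈ D) ∧
    (∀ D ∈ P, (G.induce (D : Set V)).Connected)

/-- A district-partition is *satisfying* for the preferred candidate `p` if `p` wins strictly
more districts than any other candidate leads. -/
def SatisfyingFor {V C : Type*} (χ : V → C) (p : C) (P : Finset (Finset V)) : Prop :=
  ∀ q : C, q ≠ p →
    (P.filter fun D => leadsIn χ q D).card < (P.filter fun D => winsIn χ p D).card

/-- Vertices of the depth-2 gerrymandering instance: the root `r`, weight-branch vertices
`w_i, w'_i` for `i ∈ [d]`, set-branch vertices `s_i, s'_i` for `i ∈ [m]`, and element leaves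
`v^j_l` for `j ∈ [n]`, `l ∈ [d]`. -/
inductive V2 (n m d : ℕ) : Type where
  | root
  | w (i : Fin d)
  | w' (i : Fin d)
  | s (i : Fin m)
  | s' (i : Fin m)
  | v (j : Fin n) (l : Fin d)
  deriving DecidableEq, Fintype

/-- Candidates of the depth-2 instance: preferred candidate `p`, adversary `q`,
element candidates `a_j`, and set candidates `b_i`. -/
inductive C2 (n m : ℕ) : Type where
  | p
  | q
  | a (j : Fin n)
  | b (i : Fin m)
  deriving DecidableEq

/-- Candidate preferences of the depth-2 instance. -/
def chi2 {n m d : ℕ} : V2 n m d → C2 n m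
  | .root => .p
  | .w _ => .p
  | .w' _ => .q
  | .s i => .b i
  | .s' i => .b i
  | .v j _ => .a j

/-- The depth-2 tree: the root is adjacent to each `w_i` and each `s_i`; `w'_i` is attached to
`w_i`; `s'_i` is attached to `s_i`; and the leaf `v^j_l` is attached to `s_{att j l}`, where
`att j` enumerates (bijectively) the sets containing element `e_j`. -/
def G2 {n m d : ℕ} (att : Fin n → Fin d → Fin m) : SimpleGraph (V2 n m d) :=
  SimpleGraph.fromRel (fun x y =>
    (x = V2.root ∧ ∃ i, y = V2.w i) ∨
    (∃ i, x = V2.w i ∧ y = V2.w' i) ∨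
    (x = V2.root ∧ ∃ i, y = V2.s i) ∨
    (∃ i, x = V2.s i ∧ y = V2.s' i) ∨
    (∃ j l, x = V2.s (att j l) ∧ y = V2.v j l))

lemma walk_closed {V : Type*} {G : SimpleGraph V} {s S : Set V}
    (hcl : ∀ x ∈ s, x ∈ S → ∀ y ∈ s, G.Adj x y → y ∈ S) :
    ∀ {u v : s}, (G.induce s).Walk u v → (u : V) ∈ S → (v : V) ∈ S := by
  intro u v p
  induction p with
  | nil => exact id
  | @cons u w v h p ih =>
    intro hu
    exact ih (hcl u u.2 hu w w.2 h)

lemma adj_w {n m d : ℕ} {att : Fin n → Fin d → Fin m} {i : Fin d} {y : V2 n m d}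
    (h : (G2 att).Adj (V2.w i) y) : y = V2.root ∨ y = V2.w' i := by
  rw [G2, SimpleGraph.fromRel_adj] at h
  obtain ⟨-, h | h⟩ := h
  · rcases h with ⟨h, -⟩ | ⟨i', h, hy⟩ | ⟨h, -⟩ | ⟨i', h, -⟩ | ⟨j, l, h, -⟩ <;>
      simp_all
  · rcases h with ⟨hy, -⟩ | ⟨i', -, h⟩ | ⟨hy, -⟩ | ⟨i', -, h⟩ | ⟨j, l, -, h⟩ <;>
      simp_all

lemma adj_w' {n m d : ℕ} {att : Fin n → Fin d → Fin m} {i : Fin d} {y : V2 n m d}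
    (h : (G2 att).Adj (V2.w' i) y) : y = V2.w i := by
  rw [G2, SimpleGraph.fromRel_adj] at h
  obtain ⟨-, h | h⟩ := h
  · rcases h with ⟨h, -⟩ | ⟨i', h, -⟩ | ⟨h, -⟩ | ⟨i', h, -⟩ | ⟨j, l, h, -⟩ <;>
      simp_all
  · rcases h with ⟨-, i', h⟩ | ⟨i', hy, h⟩ | ⟨-, i', h⟩ | ⟨i', -, h⟩ | ⟨j, l, -, h⟩ <;>
      simp_all

/-- In the depth-2 gerrymandering instance constructed from a Set Cover
instance `(U, F, t)` in which every element belongs to exactly `d ≥ 3` sets: if `D` is a set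
of vertices not containing the root `r` such that the induced subgraph `G[D]` is connected and
the preferred candidate `p` wins `D`, then `D = {w_i}` for some `i ∈ [d]`. -/
theorem depth2_nonroot_p_district (n m d t : ℕ) (hd : 3 ≤ d) (htm : t ≤ m)
    (S : Fin m → Finset (Fin n))
    (hfreq : ∀ j : Fin n, (Finset.univ.filter fun i => j ∈ S i).card = d)
    (att : Fin n → Fin d → Fin m)
    (hattmem : ∀ j l, j ∈ S (att j l))
    (hattinj : ∀ j, Function.Injective (att j))
    (D : Finset (V2 n m d))
    (hroot : V2.root ∉ D)
    (hconn : ((G2 att).induce (D : Set (V2 n m d))).Connected)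
    (hwin : winsIn chi2 C2.p D) :
    ∃ i : Fin d, D = {V2.w i} := by
  classical
  -- p receives at least one vote, so some w i ∈ D
  have hq : (Finset.filter (fun x => chi2 x = C2.q) D).card <
      (Finset.filter (fun x => chi2 x = C2.p) D).card := by
    have h := hwin C2.q (by simp)
    convert h using 3
  have hpne : (D.filter fun x => chi2 x = C2.p).Nonempty := by
    rw [← Finset.card_pos]
    exact lt_of_le_of_lt (Nat.zero_le _) hq
  obtain ⟨x, hx⟩ := hpne
  rw [Finset.mem_filter] at hx
  obtain ⟨hxD, hxp⟩ := hx
  obtain ⟨i, rfl⟩ : ∃ i : Fin d, x = V2.w i := by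
    cases x with
    | root => exact absurd hxD hroot
    | w i => exact ⟨i, rfl⟩
    | w' i => simp [chi2] at hxp
    | s i => simp [chi2] at hxp
    | s' i => simp [chi2] at hxp
    | v j l => simp [chi2] at hxp
  -- D is contained in {w i, w' i}
  have hsub : ∀ y ∈ D, y = V2.w i ∨ y = V2.w' i := by
    have hcl : ∀ x ∈ (D : Set (V2 n m d)),
        x ∈ ({V2.w i, V2.w' i} : Set (V2 n m d)) →
        ∀ y ∈ (D : Set (V2 n m d)), (G2 att).Adj x y →
        y ∈ ({V2.w i, V2.w' i} : Set (V2 n m d)) := by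
      rintro x hxD (rfl | rfl) y hyD hadj
      · rcases adj_w hadj with rfl | rfl
        · exact absurd hyD hroot
        · exact Or.inr rfl
      · exact Or.inl (adj_w' hadj)
    intro y hy
    obtain ⟨wlk⟩ := hconn.preconnected ⟨V2.w i, hxD⟩ ⟨y, hy⟩
    have := walk_closed hcl wlk (Or.inl rfl)
    simpa using this
  -- w' i ∉ D
  have hw' : V2.w' i ∉ D := by
    intro hw'
    have hq2 : (Finset.filter (fun x => chi2 x = C2.q) D).card <
        (Finset.filter (fun x => chi2 x = C2.p) D).card := by
      have h := hwin C2.q (by simp)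
      convert h using 3
    have h1 : 1 ≤ (D.filter fun x => chi2 x = C2.q).card := by
      rw [Nat.one_le_iff_ne_zero, Ne, Finset.card_eq_zero]
      intro h
      have : V2.w' i ∈ (D.filter fun x => chi2 x = C2.q) := by
        exact Finset.mem_filter.mpr ⟨hw', rfl⟩
      rw [h] at this
      simp at this
    have h2 : (D.filter fun x => chi2 x = C2.p).card ≤ 1 := by
      have : (D.filter fun x => chi2 x = C2.p) ⊆ {V2.w i} := by
        intro y hy
        rw [Finset.mem_filter] at hy
        obtain ⟨hyD, hyp⟩ := hy
        rcases hsub y hyD with rfl | rfl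
        · simp
        · simp [chi2] at hyp
      simpa using Finset.card_le_card this
    omega
  refine ⟨i, ?_⟩
  apply Finset.Subset.antisymm
  · intro y hy
    rcases hsub y hy with rfl | rfl
    · simp
    · exact absurd hy hw'
  · intro y hy
    rw [Finset.mem_singleton] at hy
    subst hy
    exact hxD
end

section
/- Let (U,F,t) be a Set Cover instance in which every element belongs to exactly d ≥ 3 sets. If there exists X ⊆ F with |X| ≤ t and ∪_{S∈X} S = U, then the depth-2 gerrymandering instance constructed from (U,F,t) admits a district-partition into k = t+3 districts that is satisfying for the preferred candidate p. -/
attribute [local instance] Classical.propDecidable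

open Finset

namespace Depth2Proof

variable {n m d : ℕ}

/-- First district: the singleton `{w w0}`. -/
def DA (n m : ℕ) {d : ℕ} (w0 : Fin d) : Finset (V2 n m d) := {V2.w w0}

/-- Second district: the singleton `{w' w0}`. -/
def DB (n m : ℕ) {d : ℕ} (w0 : Fin d) : Finset (V2 n m d) := {V2.w' w0}

/-- Cover districts: `s i`, `s' i`, and all leaves attached to `s i`. -/
def Di (att : Fin n → Fin d → Fin m) (i : Fin m) : Finset (V2 n m d) :=
  Finset.univ.filter fun x => x = V2.s i ∨ x = V2.s' i ∨ ∃ j l, att j l = i ∧ x = V2.v j l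

/-- The big district: everything else. -/
def D0 (att : Fin n → Fin d → Fin m) (w0 : Fin d) (X : Finset (Fin m)) : Finset (V2 n m d) :=
  Finset.univ.filter fun x => x = V2.root ∨ (∃ i, i ≠ w0 ∧ x = V2.w i) ∨
    (∃ i, i ≠ w0 ∧ x = V2.w' i) ∨ (∃ i, i ∉ X ∧ (x = V2.s i ∨ x = V2.s' i)) ∨
    (∃ j l, att j l ∉ X ∧ x = V2.v j l)

variable {att : Fin n → Fin d → Fin m} {w0 : Fin d} {X : Finset (Fin m)}

lemma adj_root_w (i : Fin d) : (G2 att).Adj V2.root (V2.w i) := by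
  rw [G2, SimpleGraph.fromRel_adj]
  exact ⟨by simp, Or.inl (Or.inl ⟨rfl, i, rfl⟩)⟩

lemma adj_w_w' (i : Fin d) : (G2 att).Adj (V2.w i) (V2.w' i) := by
  rw [G2, SimpleGraph.fromRel_adj]
  exact ⟨by simp, Or.inl (Or.inr (Or.inl ⟨i, rfl, rfl⟩))⟩

lemma adj_root_s (i : Fin m) : (G2 att).Adj V2.root (V2.s i) := by
  rw [G2, SimpleGraph.fromRel_adj]
  exact ⟨by simp, Or.inl (Or.inr (Or.inr (Or.inl ⟨rfl, i, rfl⟩)))⟩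

lemma adj_s_s' (i : Fin m) : (G2 att).Adj (V2.s i) (V2.s' i) := by
  rw [G2, SimpleGraph.fromRel_adj]
  exact ⟨by simp, Or.inl (Or.inr (Or.inr (Or.inr (Or.inl ⟨i, rfl, rfl⟩))))⟩

lemma adj_s_v (j : Fin n) (l : Fin d) : (G2 att).Adj (V2.s (att j l)) (V2.v j l) := by
  rw [G2, SimpleGraph.fromRel_adj]
  exact ⟨by simp, Or.inl (Or.inr (Or.inr (Or.inr (Or.inr ⟨j, l, rfl, rfl⟩))))⟩

lemma ind_adj {V : Type*} {G : SimpleGraph V} {D : Finset V} {x y : V}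
    (hx : x ∈ D) (hy : y ∈ D) (h : G.Adj x y) :
    (G.induce (D : Set V)).Adj ⟨x, hx⟩ ⟨y, hy⟩ := h

lemma connected_of_hub {V : Type*} (G : SimpleGraph V) (D : Finset V) (h : V) (hh : h ∈ D)
    (hr : ∀ x, (hx : x ∈ D) → (G.induce (D : Set V)).Reachable ⟨h, hh⟩ ⟨x, hx⟩) :
    (G.induce (D : Set V)).Connected := by
  rw [SimpleGraph.connected_iff]
  refine ⟨fun a b => ?_, ⟨⟨h, hh⟩⟩⟩
  obtain ⟨a, ha⟩ := a
  obtain ⟨b, hb⟩ := b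
  exact (hr a ha).symm.trans (hr b hb)

lemma eq_of_leads {V C : Type*} {χ : V → C} {c q' : C} {D : Finset V}
    (hw : winsIn χ c D) (hl : leadsIn χ q' D) : q' = c := by
  by_contra h
  exact absurd (hl c) (not_le.mpr (hw q' h))


lemma w_inj : Function.Injective (V2.w : Fin d → V2 n m d) := fun a b h => by
  simpa using h

lemma w'_inj : Function.Injective (V2.w' : Fin d → V2 n m d) := fun a b h => by
  simpa using h

lemma filter_p_D0 {h : DecidablePred fun x : V2 n m d => chi2 x = C2.p} :
    (@Finset.filter _ _ h (D0 att w0 X)) =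
    insert V2.root ((Finset.univ.erase w0).image V2.w) := by
  ext x
  rcases x with _ | i | i | i | i | ⟨j, l⟩ <;> simp [D0, chi2, eq_comm]

lemma card_p_D0 (hd : 1 ≤ d) {h : DecidablePred fun x : V2 n m d => chi2 x = C2.p} :
    (@Finset.filter _ _ h (D0 att w0 X)).card = d := by
  rw [filter_p_D0, Finset.card_insert_of_notMem (by simp),
    Finset.card_image_of_injective _ w_inj, Finset.card_erase_of_mem (Finset.mem_univ _)]
  simp
  omega

lemma filter_q_D0 {h : DecidablePred fun x : V2 n m d => chi2 x = C2.q} :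
    (@Finset.filter _ _ h (D0 att w0 X)) = (Finset.univ.erase w0).image V2.w' := by
  ext x
  rcases x with _ | i | i | i | i | ⟨j, l⟩ <;> simp [D0, chi2, eq_comm]

lemma card_q_D0 {h : DecidablePred fun x : V2 n m d => chi2 x = C2.q} :
    (@Finset.filter _ _ h (D0 att w0 X)).card = d - 1 := by
  rw [filter_q_D0, Finset.card_image_of_injective _ w'_inj,
    Finset.card_erase_of_mem (Finset.mem_univ _)]
  simp

lemma card_b_D0 (i : Fin m) {h : DecidablePred fun x : V2 n m d => chi2 x = C2.b i} :
    (@Finset.filter _ _ h (D0 att w0 X)).card ≤ 2 := by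
  have hsub : (@Finset.filter _ _ h (D0 att w0 X)) ⊆ {V2.s i, V2.s' i} := by
    intro x hx
    rcases x with _ | i' | i' | i' | i' | ⟨j, l⟩ <;> simp_all [D0, chi2]
  exact le_trans (Finset.card_le_card hsub)
    (le_trans (Finset.card_insert_le _ _) (by simp))

lemma card_a_D0 (j : Fin n) {l0 : Fin d} (hl0 : att j l0 ∈ X)
    {h : DecidablePred fun x : V2 n m d => chi2 x = C2.a j} :
    (@Finset.filter _ _ h (D0 att w0 X)).card ≤ d - 1 := by
  have hsub : (@Finset.filter _ _ h (D0 att w0 X)) ⊆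
      (Finset.univ.erase l0).image (V2.v j) := by
    intro x hx
    rcases x with _ | i' | i' | i' | i' | ⟨j', l⟩ <;> simp_all [D0, chi2]
    obtain ⟨h1, rfl⟩ := hx
    rintro rfl
    exact h1 hl0
  refine le_trans (Finset.card_le_card hsub) ?_
  rw [Finset.card_image_of_injective _ (fun a b h => by simpa using h),
    Finset.card_erase_of_mem (Finset.mem_univ _)]
  simp

lemma wins_D0 (hd : 3 ≤ d) (hXcov : ∀ j : Fin n, ∃ l, att j l ∈ X) :
    winsIn chi2 C2.p (D0 att w0 X) := by
  intro c' hc'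
  rw [card_p_D0 (by omega)]
  rcases c' with _ | _ | j | i
  · exact absurd rfl hc'
  · rw [card_q_D0]; omega
  · obtain ⟨l0, hl0⟩ := hXcov j
    exact lt_of_le_of_lt (card_a_D0 j hl0) (by omega)
  · exact lt_of_le_of_lt (card_b_D0 i) (by omega)

lemma wins_A : winsIn chi2 C2.p (DA n m w0) := by
  intro c' hc'
  have h2 : C2.p ≠ c' := Ne.symm hc'
  simp only [DA]
  rw [Finset.filter_singleton, Finset.filter_singleton]
  simp [chi2, h2]

lemma wins_B : winsIn chi2 C2.q (DB n m w0) := by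
  intro c' hc'
  have h2 : C2.q ≠ c' := Ne.symm hc'
  simp only [DB]
  rw [Finset.filter_singleton, Finset.filter_singleton]
  simp [chi2, h2]

lemma filter_b_Di (i : Fin m) {h : DecidablePred fun x : V2 n m d => chi2 x = C2.b i} :
    (@Finset.filter _ _ h (Di att i)) = {V2.s i, V2.s' i} := by
  ext x
  rcases x with _ | i' | i' | i' | i' | ⟨j, l⟩ <;> simp [Di, chi2, eq_comm]

lemma card_b_Di (i : Fin m) {h : DecidablePred fun x : V2 n m d => chi2 x = C2.b i} :
    (@Finset.filter _ _ h (Di att i)).card = 2 := by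
  rw [filter_b_Di]
  rw [Finset.card_insert_of_notMem (by simp), Finset.card_singleton]

lemma filter_p_Di (i : Fin m) {h : DecidablePred fun x : V2 n m d => chi2 x = C2.p} :
    (@Finset.filter _ _ h (Di att i)) = ∅ := by
  rw [Finset.filter_eq_empty_iff]
  intro x hx
  rcases x with _ | i' | i' | i' | i' | ⟨j, l⟩ <;> simp_all [Di, chi2]

lemma filter_q_Di (i : Fin m) {h : DecidablePred fun x : V2 n m d => chi2 x = C2.q} :
    (@Finset.filter _ _ h (Di att i)) = ∅ := by
  rw [Finset.filter_eq_empty_iff]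
  intro x hx
  rcases x with _ | i' | i' | i' | i' | ⟨j, l⟩ <;> simp_all [Di, chi2]

lemma filter_b'_Di {i i' : Fin m} (hne : i' ≠ i)
    {h : DecidablePred fun x : V2 n m d => chi2 x = C2.b i'} :
    (@Finset.filter _ _ h (Di att i)) = ∅ := by
  rw [Finset.filter_eq_empty_iff]
  intro x hx
  rcases x with _ | i'' | i'' | i'' | i'' | ⟨j, l⟩ <;> simp_all [Di, chi2]
  · rintro rfl; exact hne rfl
  · rintro rfl; exact hne rfl

lemma card_a_Di (hattinj : ∀ j, Function.Injective (att j)) (i : Fin m) (j : Fin n)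
    {h : DecidablePred fun x : V2 n m d => chi2 x = C2.a j} :
    (@Finset.filter _ _ h (Di att i)).card ≤ 1 := by
  rw [Finset.card_le_one]
  intro x hx y hy
  simp only [Di, Finset.mem_filter, Finset.mem_univ, true_and] at hx hy
  rcases x with _ | i' | i' | i' | i' | ⟨j', l⟩ <;>
    rcases y with _ | i'' | i'' | i'' | i'' | ⟨j'', l'⟩ <;>
      simp_all [Di, chi2, Finset.mem_filter]
  obtain ⟨h1, rfl⟩ := hx
  obtain ⟨h2, rfl⟩ := hy
  exact hattinj _ (h1.trans h2.symm)

lemma wins_Di (hattinj : ∀ j, Function.Injective (att j)) (i : Fin m) :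
    winsIn chi2 (C2.b i) (Di att i) := by
  intro c' hc'
  rw [card_b_Di]
  rcases c' with _ | _ | j | i'
  · rw [filter_p_Di]; simp
  · rw [filter_q_Di]; simp
  · exact lt_of_le_of_lt (card_a_Di hattinj i j) (by omega)
  · rw [filter_b'_Di (fun hcon => hc' (by rw [hcon]))]; simp



lemma mem_DA : V2.w w0 ∈ DA n m w0 := by simp [DA]
lemma mem_DB : V2.w' w0 ∈ DB n m w0 := by simp [DB]
lemma mem_D0_root : V2.root ∈ D0 att w0 X := by simp [D0]
lemma mem_D0_w {i : Fin d} (hi : i ≠ w0) : V2.w i ∈ D0 att w0 X := by simp [D0, hi]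
lemma mem_D0_w' {i : Fin d} (hi : i ≠ w0) : V2.w' i ∈ D0 att w0 X := by simp [D0, hi]
lemma mem_D0_s {i : Fin m} (hi : i ∉ X) : V2.s i ∈ D0 att w0 X := by simp [D0, hi]
lemma mem_D0_s' {i : Fin m} (hi : i ∉ X) : V2.s' i ∈ D0 att w0 X := by simp [D0, hi]
lemma mem_D0_v {j : Fin n} {l : Fin d} (hl : att j l ∉ X) : V2.v j l ∈ D0 att w0 X := by
  simp [D0, hl]
lemma mem_Di_s {i : Fin m} : V2.s i ∈ Di att i := by simp [Di]
lemma mem_Di_s' {i : Fin m} : V2.s' i ∈ Di att i := by simp [Di]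
lemma mem_Di_v {j : Fin n} {l : Fin d} {i : Fin m} (hl : att j l = i) :
    V2.v j l ∈ Di att i := by
  simp only [Di, Finset.mem_filter, Finset.mem_univ, true_and]
  exact Or.inr (Or.inr ⟨j, l, hl, rfl⟩)

lemma w_not_DB : V2.w w0 ∉ DB n m w0 := by simp [DB]
lemma w_not_D0 : V2.w w0 ∉ D0 att w0 X := by simp [D0]
lemma w_not_Di (i : Fin m) : V2.w w0 ∉ Di att i := by simp [Di]
lemma w'_not_DA : V2.w' w0 ∉ DA n m w0 := by simp [DA]
lemma w'_not_D0 : V2.w' w0 ∉ D0 att w0 X := by simp [D0]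
lemma w'_not_Di (i : Fin m) : V2.w' w0 ∉ Di att i := by simp [Di]
lemma root_not_DA : V2.root ∉ DA n m w0 := by simp [DA]
lemma root_not_DB : V2.root ∉ DB n m w0 := by simp [DB]
lemma root_not_Di (i : Fin m) : V2.root ∉ Di att i := by simp [Di]

lemma Di_inj {i i' : Fin m} (h : Di att i = Di att i') : i = i' := by
  have hs : V2.s i ∈ Di att i' := h ▸ mem_Di_s
  simp [Di] at hs
  tauto

lemma disj_D0_Di {i : Fin m} (hi : i ∈ X) : Disjoint (D0 att w0 X) (Di att i) := by
  rw [Finset.disjoint_left]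
  intro x hx hx'
  rcases x with _ | i' | i' | i' | i' | ⟨j, l⟩ <;> simp_all [D0, Di]

lemma disj_Di_Di {i i' : Fin m} (hne : i ≠ i') : Disjoint (Di att i) (Di att i') := by
  rw [Finset.disjoint_left]
  intro x hx hx'
  rcases x with _ | i'' | i'' | i'' | i'' | ⟨j, l⟩ <;> simp_all [Di]

lemma conn_DA : ((G2 att).induce ((DA n m w0 : Finset (V2 n m d)) : Set (V2 n m d))).Connected := by
  apply connected_of_hub (G2 att) (DA n m w0) (V2.w w0) mem_DA
  intro x hx
  have hx' := hx
  simp only [DA, Finset.mem_singleton] at hx'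
  subst hx'
  exact SimpleGraph.Reachable.refl _

lemma conn_DB : ((G2 att).induce ((DB n m w0 : Finset (V2 n m d)) : Set (V2 n m d))).Connected := by
  apply connected_of_hub (G2 att) (DB n m w0) (V2.w' w0) mem_DB
  intro x hx
  have hx' := hx
  simp only [DB, Finset.mem_singleton] at hx'
  subst hx'
  exact SimpleGraph.Reachable.refl _

lemma conn_Di (i : Fin m) :
    ((G2 att).induce ((Di att i : Finset (V2 n m d)) : Set (V2 n m d))).Connected := by
  apply connected_of_hub (G2 att) (Di att i) (V2.s i) mem_Di_s
  intro x hx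
  have hx' := hx
  simp only [Di, Finset.mem_filter, Finset.mem_univ, true_and] at hx'
  rcases hx' with rfl | rfl | ⟨j, l, hl, rfl⟩
  · exact SimpleGraph.Reachable.refl _
  · exact (ind_adj mem_Di_s hx (adj_s_s' i)).reachable
  · exact (ind_adj mem_Di_s hx (hl ▸ adj_s_v j l)).reachable

lemma conn_D0 :
    ((G2 att).induce ((D0 att w0 X : Finset (V2 n m d)) : Set (V2 n m d))).Connected := by
  apply connected_of_hub (G2 att) (D0 att w0 X) V2.root mem_D0_root
  intro x hx
  have hx' := hx
  simp only [D0, Finset.mem_filter, Finset.mem_univ, true_and] at hx'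
  rcases hx' with rfl | ⟨i, hi, rfl⟩ | ⟨i, hi, rfl⟩ | ⟨i, hi, rfl | rfl⟩ | ⟨j, l, hl, rfl⟩
  · exact SimpleGraph.Reachable.refl _
  · exact (ind_adj mem_D0_root hx (adj_root_w i)).reachable
  · exact ((ind_adj mem_D0_root (mem_D0_w hi) (adj_root_w i)).reachable).trans
      ((ind_adj (mem_D0_w hi) hx (adj_w_w' i)).reachable)
  · exact (ind_adj mem_D0_root hx (adj_root_s i)).reachable
  · exact ((ind_adj mem_D0_root (mem_D0_s hi) (adj_root_s i)).reachable).trans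
      ((ind_adj (mem_D0_s hi) hx (adj_s_s' i)).reachable)
  · exact ((ind_adj mem_D0_root (mem_D0_s hl) (adj_root_s (att j l))).reachable).trans
      ((ind_adj (mem_D0_s hl) hx (adj_s_v j l)).reachable)

end Depth2Proof

open Depth2Proof Finset in
/-- forward direction of Theorem 1.  Let `(U, F, t)` be a Set Cover instance
in which every element belongs to exactly `d ≥ 3` sets.  If there exists `X ⊆ F` with
`|X| ≤ t` and `∪_{S ∈ X} S = U`, then the depth-2 gerrymandering instance constructed from
`(U, F, t)` admits a district-partition into `k = t + 3` districts that is satisfying for the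
preferred candidate `p`. -/
theorem depth2_cover_imp_gerrymander (n m d t : ℕ) (hd : 3 ≤ d) (htm : t ≤ m)
    (S : Fin m → Finset (Fin n))
    (hfreq : ∀ j : Fin n, (Finset.univ.filter fun i => j ∈ S i).card = d)
    (att : Fin n → Fin d → Fin m)
    (hattmem : ∀ j l, j ∈ S (att j l))
    (hattinj : ∀ j, Function.Injective (att j))
    (hcover : ∃ X : Finset (Fin m), X.card ≤ t ∧ ∀ j : Fin n, ∃ i ∈ X, j ∈ S i) :
    ∃ P : Finset (Finset (V2 n m d)),
      IsDistrictPartition (G2 att) (t + 3) P ∧ SatisfyingFor chi2 C2.p P := by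
  obtain ⟨X0, hX0card, hX0cov⟩ := hcover
  obtain ⟨X, hsub, hXcard⟩ := Finset.exists_superset_card_eq hX0card (by simpa using htm)
  -- the padded family `X` still covers, via the attachment function
  have hXcov : ∀ j : Fin n, ∃ l, att j l ∈ X := by
    intro j
    obtain ⟨i, hiX, hiS⟩ := hX0cov j
    have himg : (Finset.univ.image (att j)) = Finset.univ.filter (fun i => j ∈ S i) := by
      apply Finset.eq_of_subset_of_card_le
      · intro i' hi'
        simp only [Finset.mem_image] at hi'
        obtain ⟨l, -, rfl⟩ := hi'
        simp [hattmem j l]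
      · rw [hfreq j, Finset.card_image_of_injective _ (hattinj j)]
        simp
    have hmem : i ∈ Finset.univ.image (att j) := by
      rw [himg]; simp [hiS]
    obtain ⟨l, -, hl⟩ := Finset.mem_image.mp hmem
    exact ⟨l, hl ▸ hsub hiX⟩
  have hd1 : 0 < d := by omega
  set w0 : Fin d := ⟨0, hd1⟩ with hw0def
  set P : Finset (Finset (V2 n m d)) :=
    insert (DA n m w0) (insert (DB n m w0) (insert (D0 att w0 X) (X.image (Di att))))
    with hPdef
  -- distinctness facts
  have hA_ne_B : DA n m w0 ≠ DB n m w0 := fun h => w_not_DB (h ▸ mem_DA)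
  have hA_ne_D0 : DA n m w0 ≠ D0 att w0 X := fun h => w_not_D0 (h ▸ mem_DA)
  have hA_ne_Di : ∀ i : Fin m, DA n m w0 ≠ Di att i := fun i h => w_not_Di i (h ▸ mem_DA)
  have hB_ne_D0 : DB n m w0 ≠ D0 att w0 X := fun h => w'_not_D0 (h ▸ mem_DB)
  have hB_ne_Di : ∀ i : Fin m, DB n m w0 ≠ Di att i := fun i h => w'_not_Di i (h ▸ mem_DB)
  have hD0_ne_Di : ∀ i : Fin m, D0 att w0 X ≠ Di att i :=
    fun i h => root_not_Di i (h ▸ mem_D0_root)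
  have hmemP : ∀ D : Finset (V2 n m d), D ∈ P ↔
      D = DA n m w0 ∨ D = DB n m w0 ∨ D = D0 att w0 X ∨ ∃ i ∈ X, D = Di att i := by
    intro D
    rw [hPdef]
    simp only [Finset.mem_insert, Finset.mem_image]
    constructor
    · rintro (rfl | rfl | rfl | ⟨i, hi, rfl⟩)
      · exact Or.inl rfl
      · exact Or.inr (Or.inl rfl)
      · exact Or.inr (Or.inr (Or.inl rfl))
      · exact Or.inr (Or.inr (Or.inr ⟨i, hi, rfl⟩))
    · rintro (rfl | rfl | rfl | ⟨i, hi, rfl⟩)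
      · exact Or.inl rfl
      · exact Or.inr (Or.inl rfl)
      · exact Or.inr (Or.inr (Or.inl rfl))
      · exact Or.inr (Or.inr (Or.inr ⟨i, hi, rfl⟩))
  have hAmemP : DA n m w0 ∈ P := (hmemP _).mpr (Or.inl rfl)
  have hBmemP : DB n m w0 ∈ P := (hmemP _).mpr (Or.inr (Or.inl rfl))
  have hD0memP : D0 att w0 X ∈ P := (hmemP _).mpr (Or.inr (Or.inr (Or.inl rfl)))
  refine ⟨P, ⟨?_, ?_, ?_, ?_, ?_⟩, ?_⟩
  -- cardinality
  · rw [hPdef, Finset.card_insert_of_notMem, Finset.card_insert_of_notMem,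
      Finset.card_insert_of_notMem, Finset.card_image_of_injOn
        (fun a _ b _ h => Di_inj h), hXcard]
    · rw [Finset.mem_image]
      push_neg
      intro i hi
      exact fun h => hD0_ne_Di i h.symm
    · simp only [Finset.mem_insert, Finset.mem_image]
      push_neg
      exact ⟨hB_ne_D0, fun i hi h => hB_ne_Di i h.symm⟩
    · simp only [Finset.mem_insert, Finset.mem_image]
      push_neg
      exact ⟨hA_ne_B, hA_ne_D0, fun i hi h => hA_ne_Di i h.symm⟩
  -- nonempty
  · intro D hD
    rcases (hmemP D).mp hD with rfl | rfl | rfl | ⟨i, hi, rfl⟩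
    · exact ⟨_, mem_DA⟩
    · exact ⟨_, mem_DB⟩
    · exact ⟨_, mem_D0_root⟩
    · exact ⟨_, mem_Di_s⟩
  -- pairwise disjoint
  · intro D hD D' hD' hne
    rcases (hmemP D).mp hD with rfl | rfl | rfl | ⟨i, hi, rfl⟩ <;>
      rcases (hmemP D').mp hD' with rfl | rfl | rfl | ⟨i', hi', rfl⟩
    · exact absurd rfl hne
    · simp [DA, DB]
    · exact Finset.disjoint_singleton_left.mpr w_not_D0
    · exact Finset.disjoint_singleton_left.mpr (w_not_Di i')
    · simp [DA, DB, eq_comm]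
    · exact absurd rfl hne
    · exact Finset.disjoint_singleton_left.mpr w'_not_D0
    · exact Finset.disjoint_singleton_left.mpr (w'_not_Di i')
    · exact (Finset.disjoint_singleton_left.mpr w_not_D0).symm
    · exact (Finset.disjoint_singleton_left.mpr w'_not_D0).symm
    · exact absurd rfl hne
    · exact disj_D0_Di hi'
    · exact (Finset.disjoint_singleton_left.mpr (w_not_Di i)).symm
    · exact (Finset.disjoint_singleton_left.mpr (w'_not_Di i)).symm
    · exact (disj_D0_Di hi).symm
    · exact disj_Di_Di (fun h => hne (h ▸ rfl))
  -- covering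
  · intro x
    rcases x with _ | i | i | i | i | ⟨j, l⟩
    · exact ⟨_, hD0memP, mem_D0_root⟩
    · by_cases hi : i = w0
      · exact ⟨_, hAmemP, hi ▸ mem_DA⟩
      · exact ⟨_, hD0memP, mem_D0_w hi⟩
    · by_cases hi : i = w0
      · exact ⟨_, hBmemP, hi ▸ mem_DB⟩
      · exact ⟨_, hD0memP, mem_D0_w' hi⟩
    · by_cases hi : i ∈ X
      · exact ⟨_, (hmemP _).mpr (Or.inr (Or.inr (Or.inr ⟨i, hi, rfl⟩))), mem_Di_s⟩
      · exact ⟨_, hD0memP, mem_D0_s hi⟩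
    · by_cases hi : i ∈ X
      · exact ⟨_, (hmemP _).mpr (Or.inr (Or.inr (Or.inr ⟨i, hi, rfl⟩))), mem_Di_s'⟩
      · exact ⟨_, hD0memP, mem_D0_s' hi⟩
    · by_cases hi : att j l ∈ X
      · exact ⟨_, (hmemP _).mpr (Or.inr (Or.inr (Or.inr ⟨att j l, hi, rfl⟩))),
          mem_Di_v rfl⟩
      · exact ⟨_, hD0memP, mem_D0_v hi⟩
  -- connected
  · intro D hD
    rcases (hmemP D).mp hD with rfl | rfl | rfl | ⟨i, hi, rfl⟩
    · exact conn_DA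
    · exact conn_DB
    · exact conn_D0
    · exact conn_Di i
  -- satisfying
  · intro q' hq'
    have hwins2 : 2 ≤ (P.filter fun D => winsIn chi2 C2.p D).card := by
      have hsub2 : ({DA n m w0, D0 att w0 X} : Finset (Finset (V2 n m d))) ⊆
          P.filter fun D => winsIn chi2 C2.p D := by
        intro D hD
        simp only [Finset.mem_insert, Finset.mem_singleton] at hD
        rcases hD with rfl | rfl
        · exact Finset.mem_filter.mpr ⟨hAmemP, wins_A⟩
        · exact Finset.mem_filter.mpr ⟨hD0memP, wins_D0 hd hXcov⟩
      have h2 : ({DA n m w0, D0 att w0 X} : Finset (Finset (V2 n m d))).card = 2 := by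
        rw [Finset.card_insert_of_notMem (by simpa using hA_ne_D0), Finset.card_singleton]
      rw [← h2]
      exact Finset.card_le_card hsub2
    have hleads1 : (P.filter fun D => leadsIn chi2 q' D).card ≤ 1 := by
      rw [Finset.card_le_one]
      intro D hD E hE
      rw [Finset.mem_filter] at hD hE
      have hclass : ∀ F : Finset (V2 n m d), F ∈ P → leadsIn chi2 q' F →
          (q' = C2.q ∧ F = DB n m w0) ∨ ∃ i ∈ X, q' = C2.b i ∧ F = Di att i := by
        intro F hF hl
        rcases (hmemP F).mp hF with rfl | rfl | rfl | ⟨i, hi, rfl⟩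
        · exact absurd (eq_of_leads wins_A hl) hq'
        · exact Or.inl ⟨eq_of_leads wins_B hl, rfl⟩
        · exact absurd (eq_of_leads (wins_D0 hd hXcov) hl) hq'
        · exact Or.inr ⟨i, hi, eq_of_leads (wins_Di hattinj i) hl, rfl⟩
      rcases hclass D hD.1 hD.2 with ⟨hq1, rfl⟩ | ⟨i, hi, hq1, rfl⟩ <;>
        rcases hclass E hE.1 hE.2 with ⟨hq2, rfl⟩ | ⟨i', hi', hq2, rfl⟩
      · rfl
      · exact absurd (hq1 ▸ hq2) (by simp)
      · exact absurd (hq1 ▸ hq2) (by simp)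
      · have : i = i' := by
          have := hq1 ▸ hq2
          simpa using this
        rw [this]
    omega
end

section
/- Let (U,F,t) be a Set Cover instance in which every element belongs to exactly d ≥ 3 sets. Then there exists X ⊆ F with |X| ≤ t and ∪_{S∈X} S = U if and only if the depth-2 gerrymandering instance constructed from (U,F,t) admits a district-partition into k = t+3 districts that is satisfying for the preferred candidate p. -/
attribute [local instance] Classical.propDecidable

open Finset

namespace Depth2Aux

/-- generic: in a connected induced subgraph on a set with two distinct points,
every point has a neighbor inside. -/
lemma exists_adj_mem {V : Type*} {G : SimpleGraph V} {s : Set V}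
    (hc : (G.induce s).Connected) {x y : V} (hx : x ∈ s) (hy : y ∈ s) (hxy : x ≠ y) :
    ∃ z ∈ s, G.Adj x z := by
  obtain ⟨w⟩ := hc.preconnected ⟨x, hx⟩ ⟨y, hy⟩
  cases w with
  | nil => exact (hxy rfl).elim
  | cons h p =>
    rename_i b
    exact ⟨b.1, b.2, by simpa [SimpleGraph.comap_adj] using h⟩

lemma reachable_of_adj_mem {V : Type*} {G : SimpleGraph V} {s : Set V}
    {x y : V} (hx : x ∈ s) (hy : y ∈ s) (h : G.Adj x y) :
    (G.induce s).Reachable ⟨x, hx⟩ ⟨y, hy⟩ := by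
  exact SimpleGraph.Adj.reachable (by simpa [SimpleGraph.comap_adj] using h)

lemma connected_of_reach_hub {V : Type*} {G : SimpleGraph V} {s : Set V} {hub : V}
    (hh : hub ∈ s)
    (h : ∀ x, (hx : x ∈ s) → (G.induce s).Reachable ⟨x, hx⟩ ⟨hub, hh⟩) :
    (G.induce s).Connected := by
  have : Nonempty s := ⟨⟨hub, hh⟩⟩
  refine SimpleGraph.Connected.mk ?_
  rintro ⟨a, ha⟩ ⟨b, hb⟩
  exact (h a ha).trans (h b hb).symm

/-- propagate a property along connectivity -/
lemma const_of_connected {V : Type*} {G : SimpleGraph V} {s : Set V} {β : Type*}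
    {f : V → β}
    (hc : (G.induce s).Connected)
    (hstep : ∀ x ∈ s, ∀ y ∈ s, G.Adj x y → f x = f y)
    {x y : V} (hx : x ∈ s) (hy : y ∈ s) : f x = f y := by
  obtain ⟨w⟩ := hc.preconnected ⟨x, hx⟩ ⟨y, hy⟩
  have : ∀ (a b : s) (w : (G.induce s).Walk a b), f a.1 = f b.1 := by
    intro a b w
    induction w with
    | nil => rfl
    | @cons u v b h p ih =>
      exact (hstep u.1 u.2 v.1 v.2 (by simpa [SimpleGraph.comap_adj] using h)).trans ih
  exact this _ _ w


variable {n m d t : ℕ} {att : Fin n → Fin d → Fin m}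

variable {n m d : ℕ} {att : Fin n → Fin d → Fin m}

def beta (att : Fin n → Fin d → Fin m) : V2 n m d → Option (Fin d ⊕ Fin m)
  | .root => none
  | .w i => some (.inl i)
  | .w' i => some (.inl i)
  | .s i => some (.inr i)
  | .s' i => some (.inr i)
  | .v j l => some (.inr (att j l))

lemma adj_beta {x y : V2 n m d} (h : (G2 att).Adj x y)
    (hx : x ≠ V2.root) (hy : y ≠ V2.root) : beta att x = beta att y := by
  rw [G2, SimpleGraph.fromRel_adj] at h
  obtain ⟨-, h | h⟩ := h <;>
    rcases h with ⟨h1, i, h2⟩ | ⟨i, h1, h2⟩ | ⟨h1, i, h2⟩ | ⟨i, h1, h2⟩ | ⟨j, l, h1, h2⟩ <;>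
    subst h1 <;> first | (exact absurd rfl hx) | (exact absurd rfl hy) | (subst h2; rfl)

lemma adj_w' {i : Fin d} {z : V2 n m d} (h : (G2 att).Adj (V2.w' i) z) : z = V2.w i := by
  rw [G2, SimpleGraph.fromRel_adj] at h
  obtain ⟨hne, h | h⟩ := h <;>
    rcases h with ⟨h1, i', h2⟩ | ⟨i', h1, h2⟩ | ⟨h1, i', h2⟩ | ⟨i', h1, h2⟩ | ⟨j, l, h1, h2⟩ <;>
    simp_all

lemma adj_s' {i : Fin m} {z : V2 n m d} (h : (G2 att).Adj (V2.s' i) z) : z = V2.s i := by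
  rw [G2, SimpleGraph.fromRel_adj] at h
  obtain ⟨hne, h | h⟩ := h <;>
    rcases h with ⟨h1, i', h2⟩ | ⟨i', h1, h2⟩ | ⟨h1, i', h2⟩ | ⟨i', h1, h2⟩ | ⟨j, l, h1, h2⟩ <;>
    simp_all

lemma adj_v {j : Fin n} {l : Fin d} {z : V2 n m d}
    (h : (G2 att).Adj (V2.v j l) z) : z = V2.s (att j l) := by
  rw [G2, SimpleGraph.fromRel_adj] at h
  obtain ⟨hne, h | h⟩ := h <;>
    rcases h with ⟨h1, i', h2⟩ | ⟨i', h1, h2⟩ | ⟨h1, i', h2⟩ | ⟨i', h1, h2⟩ | ⟨j', l', h1, h2⟩ <;>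
    simp_all

lemma adj_root_w {i : Fin d} : (G2 att).Adj V2.root (V2.w i) := by
  rw [G2, SimpleGraph.fromRel_adj]; exact ⟨by simp, Or.inl (Or.inl ⟨rfl, i, rfl⟩)⟩

lemma adj_w_w' {i : Fin d} : (G2 att).Adj (V2.w i) (V2.w' i) := by
  rw [G2, SimpleGraph.fromRel_adj]; exact ⟨by simp, Or.inl (Or.inr (Or.inl ⟨i, rfl, rfl⟩))⟩

lemma adj_root_s {i : Fin m} : (G2 att).Adj V2.root (V2.s i) := by
  rw [G2, SimpleGraph.fromRel_adj]
  exact ⟨by simp, Or.inl (Or.inr (Or.inr (Or.inl ⟨rfl, i, rfl⟩)))⟩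

lemma adj_s_s' {i : Fin m} : (G2 att).Adj (V2.s i) (V2.s' i) := by
  rw [G2, SimpleGraph.fromRel_adj]
  exact ⟨by simp, Or.inl (Or.inr (Or.inr (Or.inr (Or.inl ⟨i, rfl, rfl⟩))))⟩

lemma adj_s_v {j : Fin n} {l : Fin d} : (G2 att).Adj (V2.s (att j l)) (V2.v j l) := by
  rw [G2, SimpleGraph.fromRel_adj]
  exact ⟨by simp, Or.inl (Or.inr (Or.inr (Or.inr (Or.inr ⟨j, l, rfl, rfl⟩))))⟩


end Depth2Aux
namespace Depth2Aux
variable {n m d t : ℕ}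
section Forward

variable (att : Fin n → Fin d → Fin m)

/-- the district of set `i`: `s i`, `s' i`, and all leaves attached to `s i`. -/
noncomputable def Dset (i : Fin m) : Finset (V2 n m d) :=
  univ.filter (fun x => match x with
    | V2.s i' => i' = i
    | V2.s' i' => i' = i
    | V2.v j l => att j l = i
    | _ => False)

/-- the root district. -/
noncomputable def D0 (X : Finset (Fin m)) (i0 : Fin d) : Finset (V2 n m d) :=
  univ.filter (fun x => match x with
    | V2.root => True
    | V2.w i => i ≠ i0
    | V2.w' i => i ≠ i0
    | V2.s i => i ∉ X
    | V2.s' i => i ∉ X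
    | V2.v j l => att j l ∉ X)

variable {att}

lemma mem_Dset {i : Fin m} {x : V2 n m d} :
    x ∈ Dset att i ↔ (x = V2.s i ∨ x = V2.s' i ∨ ∃ j l, att j l = i ∧ x = V2.v j l) := by
  cases x <;> simp [Dset]

lemma mem_D0 {X : Finset (Fin m)} {i0 : Fin d} {x : V2 n m d} :
    x ∈ D0 att X i0 ↔ (x = V2.root ∨ (∃ i, i ≠ i0 ∧ x = V2.w i) ∨ (∃ i, i ≠ i0 ∧ x = V2.w' i)
      ∨ (∃ i, i ∉ X ∧ x = V2.s i) ∨ (∃ i, i ∉ X ∧ x = V2.s' i)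
      ∨ (∃ j l, att j l ∉ X ∧ x = V2.v j l)) := by
  cases x <;> simp [D0]

end Forward

section Forward2

variable {att : Fin n → Fin d → Fin m} {X : Finset (Fin m)} {i0 : Fin d}

/-- the home district of each vertex. -/
noncomputable def home (att : Fin n → Fin d → Fin m) (X : Finset (Fin m)) (i0 : Fin d) :
    V2 n m d → Finset (V2 n m d)
  | V2.root => D0 att X i0
  | V2.w i => if i = i0 then {V2.w i0} else D0 att X i0
  | V2.w' i => if i = i0 then {V2.w' i0} else D0 att X i0
  | V2.s i => if i ∈ X then Dset att i else D0 att X i0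
  | V2.s' i => if i ∈ X then Dset att i else D0 att X i0
  | V2.v j l => if att j l ∈ X then Dset att (att j l) else D0 att X i0

/-- the partition. -/
noncomputable def Part (att : Fin n → Fin d → Fin m) (X : Finset (Fin m)) (i0 : Fin d) :
    Finset (Finset (V2 n m d)) :=
  insert {V2.w i0} (insert {V2.w' i0} (insert (D0 att X i0) (X.image (Dset att))))

lemma mem_home (x : V2 n m d) : x ∈ home att X i0 x := by
  cases x <;> simp only [home] <;> (try split) <;>
    simp_all [mem_Dset, mem_D0] <;> tauto

lemma home_mem_Part (x : V2 n m d) : home att X i0 x ∈ Part att X i0 := by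
  cases x <;> simp only [home] <;> (try split) <;> simp [Part] <;> tauto

lemma eq_home_of_mem {D : Finset (V2 n m d)} (hD : D ∈ Part att X i0) {x : V2 n m d}
    (hx : x ∈ D) : D = home att X i0 x := by
  simp only [Part, mem_insert, mem_image] at hD
  rcases hD with rfl | rfl | rfl | ⟨i, hi, rfl⟩
  · simp only [mem_singleton] at hx; subst hx; simp [home]
  · simp only [mem_singleton] at hx; subst hx; simp [home]
  · rw [mem_D0] at hx
    rcases hx with rfl | ⟨i, hi, rfl⟩ | ⟨i, hi, rfl⟩ | ⟨i, hi, rfl⟩ | ⟨i, hi, rfl⟩ |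
      ⟨j, l, hjl, rfl⟩ <;> simp_all [home]
  · rw [mem_Dset] at hx
    rcases hx with rfl | rfl | ⟨j, l, hjl, rfl⟩
    · simp [home, hi]
    · simp [home, hi]
    · subst hjl; simp [home, hi]

end Forward2

section Forward3

variable {att : Fin n → Fin d → Fin m} {X : Finset (Fin m)} {i0 : Fin d}

lemma Dset_injective : Function.Injective (Dset att (n := n) (m := m) (d := d)) := by
  intro i i' h
  have : (V2.s i : V2 n m d) ∈ Dset att i' := h ▸ (mem_Dset.mpr (Or.inl rfl))
  rw [mem_Dset] at this
  rcases this with h | h | ⟨j, l, _, h⟩ <;> simp_all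

lemma root_mem_D0 : (V2.root : V2 n m d) ∈ D0 att X i0 := by simp [D0]

lemma wi0_notmem : ({V2.w i0} : Finset (V2 n m d)) ∉
    insert {V2.w' i0} (insert (D0 att X i0) (X.image (Dset att))) := by
  simp only [mem_insert, mem_image]
  rintro (h | h | ⟨i, hi, h⟩)
  · have := mem_singleton_self (V2.w i0 : V2 n m d)
    rw [h] at this; simp_all
  · have := root_mem_D0 (att := att) (X := X) (i0 := i0)
    rw [← h] at this; simp at this
  · have : (V2.s i : V2 n m d) ∈ Dset att i := mem_Dset.mpr (Or.inl rfl)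
    rw [h] at this; simp at this
lemma wi0'_notmem : ({V2.w' i0} : Finset (V2 n m d)) ∉
    insert (D0 att X i0) (X.image (Dset att)) := by
  simp only [mem_insert, mem_image]
  rintro (h | ⟨i, hi, h⟩)
  · have := root_mem_D0 (att := att) (X := X) (i0 := i0)
    rw [← h] at this; simp at this
  · have : (V2.s i : V2 n m d) ∈ Dset att i := mem_Dset.mpr (Or.inl rfl)
    rw [h] at this; simp at this
lemma D0_notmem : (D0 att X i0 : Finset (V2 n m d)) ∉ X.image (Dset att) := by
  simp only [mem_image]
  rintro ⟨i, hi, h⟩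
  have := root_mem_D0 (att := att) (X := X) (i0 := i0)
  rw [← h, mem_Dset] at this
  rcases this with h' | h' | ⟨j, l, _, h'⟩ <;> exact absurd h' (by simp)

lemma Part_card : (Part att X i0).card = X.card + 3 := by
  rw [Part, card_insert_of_notMem wi0_notmem, card_insert_of_notMem wi0'_notmem,
    card_insert_of_notMem D0_notmem, card_image_of_injective _ Dset_injective]

lemma Part_nonempty {D : Finset (V2 n m d)} (hD : D ∈ Part att X i0) : D.Nonempty := by
  simp only [Part, mem_insert, mem_image] at hD
  rcases hD with rfl | rfl | rfl | ⟨i, hi, rfl⟩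
  · exact ⟨_, mem_singleton_self _⟩
  · exact ⟨_, mem_singleton_self _⟩
  · exact ⟨_, root_mem_D0⟩
  · exact ⟨_, mem_Dset.mpr (Or.inl rfl)⟩

lemma Part_disjoint {D D' : Finset (V2 n m d)} (hD : D ∈ Part att X i0)
    (hD' : D' ∈ Part att X i0) (hne : D ≠ D') : Disjoint D D' := by
  rw [Finset.disjoint_left]
  intro x hx hx'
  exact hne ((eq_home_of_mem hD hx).trans (eq_home_of_mem hD' hx').symm)

lemma Part_cover (x : V2 n m d) : ∃ D ∈ Part att X i0, x ∈ D :=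
  ⟨home att X i0 x, home_mem_Part x, mem_home x⟩

lemma Part_connected {D : Finset (V2 n m d)} (hD : D ∈ Part att X i0) :
    ((G2 att).induce (D : Set (V2 n m d))).Connected := by
  simp only [Part, mem_insert, mem_image] at hD
  rcases hD with rfl | rfl | rfl | ⟨i, hi, rfl⟩
  · exact connected_of_reach_hub (hub := V2.w i0) (by simp) (fun x hx => by
      simp only [coe_singleton, Set.mem_singleton_iff] at hx
      subst hx; rfl)
  · exact connected_of_reach_hub (hub := V2.w' i0) (by simp) (fun x hx => by
      simp only [coe_singleton, Set.mem_singleton_iff] at hx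
      subst hx; rfl)
  · refine connected_of_reach_hub (hub := V2.root) (by simpa using root_mem_D0) ?_
    intro x hx
    have hx' : x ∈ D0 att X i0 := by simpa using hx
    rw [mem_D0] at hx'
    rcases hx' with rfl | ⟨i, hi, rfl⟩ | ⟨i, hi, rfl⟩ | ⟨i, hi, rfl⟩ | ⟨i, hi, rfl⟩ |
        ⟨j, l, hjl, rfl⟩
    · rfl
    · exact reachable_of_adj_mem _ _ adj_root_w.symm
    · refine (reachable_of_adj_mem (y := V2.w i) hx ?_ adj_w_w'.symm).trans
        (reachable_of_adj_mem _ _ adj_root_w.symm)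
      simp [mem_D0, hi]
    · exact reachable_of_adj_mem _ _ adj_root_s.symm
    · refine (reachable_of_adj_mem (y := V2.s i) hx ?_ adj_s_s'.symm).trans
        (reachable_of_adj_mem _ _ adj_root_s.symm)
      simp [mem_D0, hi]
    · refine (reachable_of_adj_mem (y := V2.s (att j l)) hx ?_ adj_s_v.symm).trans
        (reachable_of_adj_mem _ _ adj_root_s.symm)
      simp [mem_D0, hjl]
  · refine connected_of_reach_hub (hub := V2.s i)
      (by simpa using mem_Dset.mpr (Or.inl rfl)) ?_
    intro x hx
    have hx' : x ∈ Dset att i := by simpa using hx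
    rw [mem_Dset] at hx'
    rcases hx' with rfl | rfl | ⟨j, l, hjl, rfl⟩
    · rfl
    · exact reachable_of_adj_mem _ _ adj_s_s'.symm
    · subst hjl
      exact reachable_of_adj_mem _ _ adj_s_v.symm

end Forward3

section Forward4

variable {att : Fin n → Fin d → Fin m} {X : Finset (Fin m)} {i0 : Fin d}

lemma filter_D0_p (inst : DecidablePred (fun x : V2 n m d => chi2 x = C2.p)) :
    @Finset.filter _ _ inst (D0 att X i0)
      = insert V2.root ((univ.erase i0).image V2.w) := by
  ext x; cases x <;> simp [D0, chi2, eq_comm, Finset.mem_filter]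

lemma cnt_D0_p (inst : DecidablePred (fun x : V2 n m d => chi2 x = C2.p)) :
    (@Finset.filter _ _ inst (D0 att X i0)).card = d := by
  rw [filter_D0_p, card_insert_of_notMem (by simp), card_image_of_injective _
    (fun a b h => by injection h), card_erase_of_mem (mem_univ _), card_univ,
    Fintype.card_fin]
  have := i0.2; omega

lemma filter_D0_q (inst : DecidablePred (fun x : V2 n m d => chi2 x = C2.q)) :
    @Finset.filter _ _ inst (D0 att X i0) = (univ.erase i0).image V2.w' := by
  ext x; cases x <;> simp [D0, chi2, eq_comm, Finset.mem_filter]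

lemma cnt_D0_q (inst : DecidablePred (fun x : V2 n m d => chi2 x = C2.q)) :
    (@Finset.filter _ _ inst (D0 att X i0)).card = d - 1 := by
  rw [filter_D0_q, card_image_of_injective _ (fun a b h => by injection h),
    card_erase_of_mem (mem_univ _), card_univ, Fintype.card_fin]

lemma cnt_D0_b_mem {i : Fin m} (hi : i ∈ X)
    (inst : DecidablePred (fun x : V2 n m d => chi2 x = C2.b i)) :
    (@Finset.filter _ _ inst (D0 att X i0)).card = 0 := by
  have hh : @Finset.filter _ _ inst (D0 att X i0) = ∅ := by
    ext x
    simp only [Finset.mem_filter, notMem_empty, iff_false, not_and]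
    intro hx hc2
    cases x <;> simp_all [D0, chi2]
  rw [hh, card_empty]

lemma cnt_D0_b_notmem {i : Fin m} (hi : i ∉ X)
    (inst : DecidablePred (fun x : V2 n m d => chi2 x = C2.b i)) :
    (@Finset.filter _ _ inst (D0 att X i0)).card = 2 := by
  have hh : @Finset.filter _ _ inst (D0 att X i0) = {V2.s i, V2.s' i} := by
    ext x; cases x <;> simp [D0, chi2, eq_comm, Finset.mem_filter] <;>
      rintro rfl <;> simp_all
  rw [hh, card_insert_of_notMem (by simp), card_singleton]

lemma cnt_D0_a {j : Fin n} (hl : ∃ l, att j l ∈ X)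
    (inst : DecidablePred (fun x : V2 n m d => chi2 x = C2.a j)) :
    (@Finset.filter _ _ inst (D0 att X i0)).card < d := by
  obtain ⟨l0, hl0⟩ := hl
  have h1 : @Finset.filter _ _ inst (D0 att X i0)
      = ((univ.filter fun l => att j l ∉ X)).image (V2.v j) := by
    ext x; cases x <;> simp [D0, chi2, eq_comm, Finset.mem_filter] <;> aesop
  rw [h1, card_image_of_injective _ (fun a b h => by injection h)]
  have h2 : (univ.filter fun l => att j l ∉ X) ⊆ univ.erase l0 := by
    intro l hl
    simp only [mem_filter, mem_univ, true_and] at hl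
    simp only [mem_erase, mem_univ, and_true]
    rintro rfl; exact hl hl0
  have := card_le_card h2
  rw [card_erase_of_mem (mem_univ _), card_univ, Fintype.card_fin] at this
  have := l0.2
  omega

lemma filter_Dset_b {i : Fin m} (inst : DecidablePred (fun x : V2 n m d => chi2 x = C2.b i)) :
    @Finset.filter _ _ inst (Dset att i) = {V2.s i, V2.s' i} := by
  ext x; cases x <;> simp [Dset, chi2, eq_comm, Finset.mem_filter] <;> aesop

lemma cnt_Dset_b {i : Fin m}
    (inst : DecidablePred (fun x : V2 n m d => chi2 x = C2.b i)) :
    (@Finset.filter _ _ inst (Dset att i)).card = 2 := by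
  rw [filter_Dset_b, card_insert_of_notMem (by simp), card_singleton]

lemma cnt_Dset_le_one {i : Fin m} (hattinj : ∀ j, Function.Injective (att j))
    {c : C2 n m} (hc : c ≠ C2.b i)
    (inst : DecidablePred (fun x : V2 n m d => chi2 x = c)) :
    (@Finset.filter _ _ inst (Dset att i)).card ≤ 1 := by
  rw [card_le_one]
  intro x hx y hy
  simp only [mem_filter, Dset, mem_univ, true_and] at hx hy
  obtain ⟨hx1, hx2⟩ := hx
  obtain ⟨hy1, hy2⟩ := hy
  cases x <;> cases y <;> simp_all [chi2]
  all_goals (try (exact absurd rfl hc))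
  rename_i j1 l1 j2 l2
  have hj : j1 = j2 := by
    rw [← hy2] at hx2; injection hx2
  subst hj
  exact ⟨rfl, hattinj _ (hx1.trans hy1.symm)⟩

lemma cnt_singleton {x : V2 n m d} {c : C2 n m}
    (inst : DecidablePred (fun y : V2 n m d => chi2 y = c)) :
    (@Finset.filter _ _ inst ({x} : Finset (V2 n m d))).card
      = if chi2 x = c then 1 else 0 := by
  by_cases h : chi2 x = c
  · rw [if_pos h]
    have hh : @Finset.filter _ _ inst ({x} : Finset (V2 n m d)) = {x} := by
      ext y; simp only [Finset.mem_filter, mem_singleton]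
      exact ⟨fun hy => hy.1, fun hy => ⟨hy, hy ▸ h⟩⟩
    rw [hh, card_singleton]
  · rw [if_neg h]
    have hh : @Finset.filter _ _ inst ({x} : Finset (V2 n m d)) = ∅ := by
      ext y; simp only [Finset.mem_filter, mem_singleton, notMem_empty, iff_false,
        not_and]
      rintro rfl; exact h
    rw [hh, card_empty]

end Forward4

section Forward5

variable {att : Fin n → Fin d → Fin m} {X : Finset (Fin m)} {i0 : Fin d}

lemma wins_wi0 : winsIn chi2 C2.p ({V2.w i0} : Finset (V2 n m d)) := by
  intro c' hc'
  rw [cnt_singleton, cnt_singleton]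
  have h1 : chi2 (V2.w i0 : V2 n m d) = C2.p := rfl
  rw [h1, if_pos rfl, if_neg (fun h : C2.p = c' => hc' h.symm)]
  omega

lemma wins_D0 (hd : 3 ≤ d) (hl : ∀ j : Fin n, ∃ l, att j l ∈ X) :
    winsIn chi2 C2.p (D0 att X i0) := by
  intro c' hc'
  rw [cnt_D0_p]
  cases c' with
  | p => exact absurd rfl hc'
  | q => rw [cnt_D0_q]; omega
  | a j => exact cnt_D0_a (hl j) _
  | b i =>
    by_cases hi : i ∈ X
    · rw [cnt_D0_b_mem hi]; omega
    · rw [cnt_D0_b_notmem hi]; omega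

lemma wi0_ne_D0 : ({V2.w i0} : Finset (V2 n m d)) ≠ D0 att X i0 := by
  intro h
  have := root_mem_D0 (att := att) (X := X) (i0 := i0)
  rw [← h] at this; simp at this

lemma satisfying_Part (hd : 3 ≤ d) (hattinj : ∀ j, Function.Injective (att j))
    (hl : ∀ j : Fin n, ∃ l, att j l ∈ X) :
    SatisfyingFor chi2 C2.p (Part att X i0) := by
  have hwi0P : ({V2.w i0} : Finset (V2 n m d)) ∈ Part att X i0 := by simp [Part]
  have hD0P : D0 att X i0 ∈ Part att X i0 := by simp [Part]
  intro c hc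
  have h2 : 1 < ((Part att X i0).filter fun D => winsIn chi2 C2.p D).card := by
    rw [one_lt_card]
    exact ⟨_, mem_filter.mpr ⟨hwi0P, wins_wi0⟩, _, mem_filter.mpr ⟨hD0P, wins_D0 hd hl⟩,
      wi0_ne_D0⟩
  have key : ∀ D ∈ (Part att X i0).filter fun D => leadsIn chi2 c D,
      ∀ D' ∈ (Part att X i0).filter fun D => leadsIn chi2 c D, D = D' := by
    have main : ∀ D ∈ (Part att X i0).filter (fun D => leadsIn chi2 c D),
        (c = C2.q ∧ D = {V2.w' i0}) ∨ (∃ i ∈ X, c = C2.b i ∧ D = Dset att i) := by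
      intro D hD
      rw [mem_filter] at hD
      obtain ⟨hDP, hlead⟩ := hD
      simp only [Part, mem_insert, mem_image] at hDP
      rcases hDP with rfl | rfl | rfl | ⟨i, hi, rfl⟩
      · -- {w i0} : p has 1, c has 0
        exfalso
        have hq := hlead C2.p
        rw [cnt_singleton, cnt_singleton] at hq
        have h1 : chi2 (V2.w i0 : V2 n m d) = C2.p := rfl
        rw [h1, if_pos rfl, if_neg (fun h : C2.p = c => hc h.symm)] at hq
        omega
      · -- {w' i0}
        cases c with
        | q => exact Or.inl ⟨rfl, rfl⟩
        | p => exact absurd rfl hc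
        | a j =>
          exfalso
          have hq := hlead C2.q
          rw [cnt_singleton, cnt_singleton] at hq
          have h1 : chi2 (V2.w' i0 : V2 n m d) = C2.q := rfl
          rw [h1, if_pos rfl, if_neg (by simp)] at hq
          omega
        | b i =>
          exfalso
          have hq := hlead C2.q
          rw [cnt_singleton, cnt_singleton] at hq
          have h1 : chi2 (V2.w' i0 : V2 n m d) = C2.q := rfl
          rw [h1, if_pos rfl, if_neg (by simp)] at hq
          omega
      · -- D0
        exfalso
        have hq := hlead C2.p
        rw [cnt_D0_p] at hq
        cases c with
        | p => exact hc rfl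
        | q => rw [cnt_D0_q] at hq; omega
        | a j =>
          have h' := cnt_D0_a (att := att) (X := X) (i0 := i0) (hl j)
            (fun a => Classical.propDecidable _)
          have h'' := h' -- d bound
          omega
        | b i =>
          by_cases hi : i ∈ X
          · rw [cnt_D0_b_mem hi] at hq; omega
          · rw [cnt_D0_b_notmem hi] at hq; omega
      · -- Dset i
        have hq := hlead (C2.b i)
        rw [cnt_Dset_b] at hq
        by_cases hci : c = C2.b i
        · exact Or.inr ⟨i, hi, hci, rfl⟩
        · exfalso
          have h' := cnt_Dset_le_one (att := att) (i := i) hattinj hci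
            (fun a => Classical.propDecidable _)
          omega
    intro D hD D' hD'
    rcases main D hD with ⟨hcq, rfl⟩ | ⟨i, hi, hcb, rfl⟩ <;>
      rcases main D' hD' with ⟨hcq', rfl⟩ | ⟨i', hi', hcb', rfl⟩
    · rfl
    · rw [hcq] at hcb'; cases hcb'
    · rw [hcq'] at hcb; cases hcb
    · rw [hcb] at hcb'
      injection hcb' with h
      rw [h]
  have h1 : ((Part att X i0).filter fun D => leadsIn chi2 c D).card ≤ 1 :=
    card_le_one.mpr key
  omega

lemma forward_main (hd : 3 ≤ d) (hattinj : ∀ j, Function.Injective (att j))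
    (hXt : X.card = t) (hl : ∀ j : Fin n, ∃ l, att j l ∈ X) :
    IsDistrictPartition (G2 att) (t + 3) (Part att X i0) ∧
      SatisfyingFor chi2 C2.p (Part att X i0) := by
  refine ⟨⟨by rw [Part_card, hXt], fun D hD => Part_nonempty hD,
    fun D hD D' hD' h => Part_disjoint hD hD' h, Part_cover,
    fun D hD => Part_connected hD⟩, satisfying_Part hd hattinj hl⟩

end Forward5


section Backward

variable {att : Fin n → Fin d → Fin m}

/-- vote count, with a fixed decidability instance. -/
noncomputable def cnt (c : C2 n m) (D : Finset (V2 n m d)) : ℕ :=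
  (D.filter fun x => chi2 x = c).card

lemma cnt_eq_filter (c : C2 n m) (D : Finset (V2 n m d))
    (inst : DecidablePred fun x : V2 n m d => chi2 x = c) :
    (@Finset.filter _ _ inst D).card = cnt c D := by
  unfold cnt; congr 1; ext x; simp [Finset.mem_filter]

lemma leadsIn_iff {c : C2 n m} {D : Finset (V2 n m d)} :
    leadsIn chi2 c D ↔ ∀ c', cnt c' D ≤ cnt c D := by
  constructor
  · intro h c'
    have h2 := h c'
    rwa [cnt_eq_filter, cnt_eq_filter] at h2
  · intro h c'
    have h2 := h c'
    rw [cnt_eq_filter, cnt_eq_filter]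
    exact h2

lemma winsIn_iff {c : C2 n m} {D : Finset (V2 n m d)} :
    winsIn chi2 c D ↔ ∀ c' ≠ c, cnt c' D < cnt c D := by
  constructor
  · intro h c' hc'
    have h2 := h c' hc'
    rwa [cnt_eq_filter, cnt_eq_filter] at h2
  · intro h c' hc'
    have h2 := h c' hc'
    rw [cnt_eq_filter, cnt_eq_filter]
    exact h2

lemma one_le_cnt {c : C2 n m} {D : Finset (V2 n m d)} {x : V2 n m d}
    (hx : x ∈ D) (hc : chi2 x = c) : 1 ≤ cnt c D := by
  unfold cnt
  rw [Nat.succ_le_iff, card_pos]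
  exact ⟨x, mem_filter.mpr ⟨hx, hc⟩⟩

lemma cnt_exists {c : C2 n m} {D : Finset (V2 n m d)} (h : 0 < cnt c D) :
    ∃ x ∈ D, chi2 x = c := by
  unfold cnt at h
  rw [card_pos] at h
  obtain ⟨x, hx⟩ := h
  rw [mem_filter] at hx
  exact ⟨x, hx.1, hx.2⟩

lemma cnt_pair_le_one {c : C2 n m} {D : Finset (V2 n m d)} {x1 x2 : V2 n m d}
    (hD : D ⊆ {x1, x2}) (hne : chi2 x1 ≠ chi2 x2) : cnt c D ≤ 1 := by
  unfold cnt
  rw [card_le_one]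
  intro a ha b hb
  rw [mem_filter] at ha hb
  have ha' := hD ha.1
  have hb' := hD hb.1
  rw [mem_insert, mem_singleton] at ha' hb'
  rcases ha' with rfl | rfl <;> rcases hb' with rfl | rfl
  · rfl
  · exact absurd (ha.2.trans hb.2.symm) hne
  · exact absurd (ha.2.trans hb.2.symm) (Ne.symm hne)
  · rfl

lemma cnt_sub_single_le_one {c : C2 n m} {D : Finset (V2 n m d)} {x1 x2 : V2 n m d}
    (hD : D ⊆ {x1, x2}) (hx2 : chi2 x2 ≠ c) : cnt c D ≤ 1 := by
  unfold cnt
  rw [card_le_one]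
  intro a ha b hb
  rw [mem_filter] at ha hb
  have ha' := hD ha.1
  have hb' := hD hb.1
  rw [mem_insert, mem_singleton] at ha' hb'
  rcases ha' with rfl | rfl <;> rcases hb' with rfl | rfl
  · rfl
  · exact absurd hb.2 hx2
  · exact absurd ha.2 hx2
  · rfl

lemma exists_leader {D : Finset (V2 n m d)} (hDne : D.Nonempty) :
    ∃ c, leadsIn chi2 c D ∧ ∃ x ∈ D, chi2 x = c := by
  obtain ⟨x0, hx0⟩ := hDne
  obtain ⟨c, hcmem, hcmax⟩ := exists_max_image (D.image chi2) (fun c => cnt c D)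
    ⟨chi2 x0, mem_image_of_mem _ hx0⟩
  rw [mem_image] at hcmem
  obtain ⟨x, hx, hxc⟩ := hcmem
  refine ⟨c, leadsIn_iff.mpr ?_, x, hx, hxc⟩
  intro c'
  by_cases hc' : c' ∈ D.image chi2
  · exact hcmax c' hc'
  · have : cnt c' D = 0 := by
      unfold cnt
      rw [card_eq_zero, filter_eq_empty_iff]
      intro y hy hyc
      exact hc' (mem_image.mpr ⟨y, hy, hyc⟩)
    omega

lemma cnt_p_le {Dr : Finset (V2 n m d)} :
    cnt C2.p Dr ≤ 1 + (univ.filter fun i : Fin d => V2.w i ∈ Dr).card := by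
  unfold cnt
  have hsub : Dr.filter (fun x => chi2 x = C2.p)
      ⊆ insert V2.root ((univ.filter fun i : Fin d => V2.w i ∈ Dr).image V2.w) := by
    intro x hx
    rw [mem_filter] at hx
    obtain ⟨hx1, hx2⟩ := hx
    cases x <;> simp_all [chi2]
  have h1 := card_le_card hsub
  have h2 := card_insert_le (V2.root : V2 n m d)
    ((univ.filter fun i : Fin d => V2.w i ∈ Dr).image V2.w)
  have h3 := card_image_le (f := (V2.w : Fin d → V2 n m d))
    (s := univ.filter fun i : Fin d => V2.w i ∈ Dr)
  omega

lemma cnt_a_ge {Dr : Finset (V2 n m d)} {j : Fin n} (h : ∀ l, V2.v j l ∈ Dr) :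
    d ≤ cnt (C2.a j) Dr := by
  unfold cnt
  have hsub : (univ : Finset (Fin d)).image (V2.v j (n := n) (m := m))
      ⊆ Dr.filter (fun x => chi2 x = C2.a j) := by
    intro x hx
    rw [mem_image] at hx
    obtain ⟨l, -, rfl⟩ := hx
    exact mem_filter.mpr ⟨h l, rfl⟩
  have h1 := card_le_card hsub
  rwa [card_image_of_injective _ (fun a b hab => by injection hab), card_univ,
    Fintype.card_fin] at h1

end Backward


section BackwardMain

variable {att : Fin n → Fin d → Fin m}

lemma backward_main (hd : 3 ≤ d)
    (S : Fin m → Finset (Fin n))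
    (hattmem : ∀ j l, j ∈ S (att j l))
    {P : Finset (Finset (V2 n m d))}
    (hP : IsDistrictPartition (G2 att) (t + 3) P)
    (hS : SatisfyingFor chi2 C2.p P) :
    ∃ X : Finset (Fin m), X.card ≤ t ∧ ∀ j : Fin n, ∃ i ∈ X, j ∈ S i := by
  obtain ⟨hcard, hnemp, hdis, hcov, hconn⟩ := hP
  have hqp : (C2.q : C2 n m) ≠ C2.p := by simp
  -- uniqueness of districts
  have huniq : ∀ {x : V2 n m d} {D D'}, D ∈ P → D' ∈ P → x ∈ D → x ∈ D' → D = D' := by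
    intro x D D' hD hD' hx hx'
    by_contra hne'
    exact (Finset.disjoint_left.mp (hdis D hD D' hD' hne')) hx hx'
  choose dist hdistP hdistmem using hcov
  set Dr := dist V2.root with hDr
  have hDrP : Dr ∈ P := hdistP _
  have hroot : V2.root ∈ Dr := hdistmem _
  -- branch constancy
  have hbranch : ∀ {D}, D ∈ P → V2.root ∉ D → ∀ {x y}, x ∈ D → y ∈ D →
      beta att x = beta att y := by
    intro D hD hr x y hx hy
    exact const_of_connected (hconn D hD)
      (fun a ha b hb hadj => adj_beta hadj
        (fun h => hr (by rw [← h]; simpa using ha))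
        (fun h => hr (by rw [← h]; simpa using hb)))
      (by simpa using hx) (by simpa using hy)
  -- pendant vertices
  have hpend : ∀ {D}, D ∈ P → ∀ {x u y : V2 n m d}, x ∈ D → y ∈ D → y ≠ x →
      (∀ z, (G2 att).Adj x z → z = u) → u ∈ D := by
    intro D hD x u y hx hy hyx hnbr
    obtain ⟨z, hz, hadj⟩ := exists_adj_mem (hconn D hD) (by simpa using hx)
      (by simpa using hy) (fun h => hyx h.symm)
    rw [← hnbr z hadj]
    simpa using hz
  -- w-branch districts
  have hWsub : ∀ {D}, D ∈ P → V2.root ∉ D → ∀ {i}, (V2.w i ∈ D ∨ V2.w' i ∈ D) →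
      D ⊆ ({V2.w i, V2.w' i} : Finset (V2 n m d)) := by
    intro D hD hr i hi x hx
    have hb : beta att x = some (Sum.inl i) := by
      rcases hi with hi | hi
      · exact hbranch hD hr hx hi
      · exact hbranch hD hr hx hi
    cases x <;> simp [beta] at hb <;> simp [hb]
  -- districts of the w' vertices
  set K := (univ : Finset (Fin d)).filter (fun i => V2.w' i ∉ Dr) with hK
  set Ed : Fin d → Finset (V2 n m d) := fun i => dist (V2.w' i) with hEd
  have hEdP : ∀ i, Ed i ∈ P := fun i => hdistP _
  have hEdmem : ∀ i, V2.w' i ∈ Ed i := fun i => hdistmem _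
  have hEdroot : ∀ i ∈ K, V2.root ∉ Ed i := by
    intro i hiK hr
    rw [hK, mem_filter] at hiK
    exact hiK.2 (huniq (hEdP i) hDrP hr hroot ▸ hEdmem i)
  have hEdsub : ∀ i ∈ K, Ed i ⊆ ({V2.w i, V2.w' i} : Finset (V2 n m d)) :=
    fun i hiK => hWsub (hEdP i) (hEdroot i hiK) (Or.inr (hEdmem i))
  have hEdlead : ∀ i ∈ K, leadsIn chi2 C2.q (Ed i) := by
    intro i hiK
    rw [leadsIn_iff]
    intro c'
    have h1 : cnt c' (Ed i) ≤ 1 := cnt_pair_le_one (hEdsub i hiK) (by simp [chi2])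
    have h2 : 1 ≤ cnt C2.q (Ed i) := one_le_cnt (hEdmem i) rfl
    omega
  have hEdnowin : ∀ i ∈ K, ¬ winsIn chi2 C2.p (Ed i) := by
    intro i hiK hw
    have h1 := (winsIn_iff.mp hw) C2.q hqp
    have h2 : 1 ≤ cnt C2.q (Ed i) := one_le_cnt (hEdmem i) rfl
    have h3 : cnt C2.p (Ed i) ≤ 1 := cnt_pair_le_one (hEdsub i hiK) (by simp [chi2])
    omega
  set E := K.image Ed with hE
  have hEcard : E.card = K.card := by
    rw [hE]
    apply card_image_of_injOn
    intro i hi i' hi' hii'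
    have h1 : V2.w' i' ∈ Ed i := hii' ▸ hEdmem i'
    have h2 := hEdsub i hi h1
    rw [mem_insert, mem_singleton] at h2
    rcases h2 with h2 | h2
    · exact absurd h2 (by simp)
    · injection h2 with h3
      omega
  set Wp := P.filter (fun D => winsIn chi2 C2.p D) with hWp
  have hkW : K.card < Wp.card := by
    have hsub : E ⊆ P.filter (fun D => leadsIn chi2 C2.q D) := by
      intro D hD
      rw [hE, mem_image] at hD
      obtain ⟨i, hi, rfl⟩ := hD
      exact mem_filter.mpr ⟨hEdP i, hEdlead i hi⟩
    have h1 := card_le_card hsub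
    have h2 := hS C2.q hqp
    rw [← hWp] at h2
    omega
  -- structure of districts won by p
  have hwon : ∀ D ∈ Wp, D = Dr ∨ ∃ i, D = {V2.w i} ∧ V2.w' i ∉ Dr ∧ V2.w i ∉ Dr := by
    intro D hD
    rw [hWp, mem_filter] at hD
    obtain ⟨hDP, hw⟩ := hD
    -- p has at least one vote in D
    have hp1 : 0 < cnt C2.p D := by
      obtain ⟨x, hx⟩ := hnemp D hDP
      by_cases hxp : chi2 x = C2.p
      · exact one_le_cnt hx hxp
      · have := (winsIn_iff.mp hw) (chi2 x) hxp
        have := one_le_cnt hx rfl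
        omega
    obtain ⟨y, hy, hyp⟩ := cnt_exists hp1
    cases y with
    | root => exact Or.inl (huniq hDP hDrP hy hroot)
    | w i =>
      by_cases hr : V2.root ∈ D
      · exact Or.inl (huniq hDP hDrP hr hroot)
      · have hsub := hWsub hDP hr (Or.inl hy)
        have hw'notin : V2.w' i ∉ D := by
          intro hw'
          have h1 := (winsIn_iff.mp hw) C2.q hqp
          have h2 : 1 ≤ cnt C2.q D := one_le_cnt hw' rfl
          have h3 : cnt C2.p D ≤ 1 := cnt_pair_le_one hsub (by simp [chi2])
          omega
        have hDsing : D = {V2.w i} := by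
          apply Finset.Subset.antisymm
          · intro x hx
            have := hsub hx
            rw [mem_insert, mem_singleton] at this
            rcases this with rfl | rfl
            · exact mem_singleton_self _
            · exact absurd hx hw'notin
          · intro x hx
            rw [mem_singleton] at hx
            exact hx ▸ hy
        refine Or.inr ⟨i, hDsing, ?_, ?_⟩
        · intro hin
          have hwi : V2.w i ∈ Dr := hpend hDrP hin hroot (by simp) (fun z hz => adj_w' hz)
          have : D = Dr := huniq hDP hDrP hy hwi
          exact hr (this ▸ hroot)
        · intro hin
          have : D = Dr := huniq hDP hDrP hy hin
          exact hr (this ▸ hroot)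
    | w' i => exact absurd hyp (by simp [chi2])
    | s i => exact absurd hyp (by simp [chi2])
    | s' i => exact absurd hyp (by simp [chi2])
    | v j l => exact absurd hyp (by simp [chi2])
  -- p wins the root district
  have hwinDr : Dr ∈ Wp := by
    by_contra hnot
    have hstruct : ∀ D : Finset (V2 n m d), ∃ i : Fin d,
        D ∈ Wp → (D = {V2.w i} ∧ V2.w' i ∉ Dr) := by
      intro D
      by_cases hD : D ∈ Wp
      · rcases hwon D hD with rfl | ⟨i, h1, h2, h3⟩
        · exact absurd hD hnot
        · exact ⟨i, fun _ => ⟨h1, h2⟩⟩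
      · exact ⟨⟨0, by omega⟩, fun h => absurd h hD⟩
    choose g hg using hstruct
    have hle : Wp.card ≤ K.card := by
      apply card_le_card_of_injOn g
      · intro D hD
        rw [hK, mem_coe, mem_filter]
        exact ⟨mem_univ _, (hg D hD).2⟩
      · intro D hD D' hD' hgg
        rw [(hg D (by simpa using hD)).1, (hg D' (by simpa using hD')).1, hgg]
    omega
  have hwinDr' : winsIn chi2 C2.p Dr := by
    have := hwinDr
    rw [hWp, mem_filter] at this
    exact this.2
  -- K is nonempty
  have hK1 : 1 ≤ K.card := by
    by_contra hk
    have hKe : K = ∅ := by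
      rw [← card_eq_zero]; omega
    have hallw : ∀ i : Fin d, V2.w i ∈ Dr := by
      intro i
      have hw'in : V2.w' i ∈ Dr := by
        by_contra hw'
        have : i ∈ K := by rw [hK, mem_filter]; exact ⟨mem_univ _, hw'⟩
        rw [hKe] at this
        simp at this
      exact hpend hDrP hw'in hroot (by simp) (fun z hz => adj_w' hz)
    -- every won district is Dr
    have hWsub1 : Wp ⊆ {Dr} := by
      intro D hD
      rcases hwon D hD with rfl | ⟨i, h1, h2, h3⟩
      · exact mem_singleton_self _
      · exact absurd (hallw i) h3
    have hW1 : Wp.card ≤ 1 := by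
      have := card_le_card hWsub1
      simpa using this
    -- a second district exists and its leader contradicts
    have h2P : 1 < P.card := by omega
    obtain ⟨D1, hD1, D2, hD2, hD12⟩ := one_lt_card.mp h2P
    have hexD : ∃ D' ∈ P, D' ≠ Dr := by
      by_cases h : D1 = Dr
      · exact ⟨D2, hD2, fun hh => hD12 (h ▸ hh ▸ rfl)⟩
      · exact ⟨D1, hD1, h⟩
    obtain ⟨D', hD'P, hD'ne⟩ := hexD
    obtain ⟨c, hclead, x, hx, hxc⟩ := exists_leader (hnemp D' hD'P)
    have hcnp : c ≠ C2.p := by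
      rintro rfl
      have hxDr : x ∈ Dr := by
        cases x with
        | root => exact hD'ne (huniq hD'P hDrP hx hroot) |>.elim
        | w i => exact hallw i
        | w' i => exact absurd hxc (by simp [chi2])
        | s i => exact absurd hxc (by simp [chi2])
        | s' i => exact absurd hxc (by simp [chi2])
        | v j l => exact absurd hxc (by simp [chi2])
      cases x with
      | root => exact hD'ne (huniq hD'P hDrP hx hroot)
      | w i => exact hD'ne (huniq hD'P hDrP hx hxDr)
      | w' i => exact absurd hxc (by simp [chi2])
      | s i => exact absurd hxc (by simp [chi2])
      | s' i => exact absurd hxc (by simp [chi2])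
      | v j l => exact absurd hxc (by simp [chi2])
    have hlt := hS c hcnp
    rw [← hWp] at hlt
    have hmem : D' ∈ P.filter (fun D => leadsIn chi2 c D) := mem_filter.mpr ⟨hD'P, hclead⟩
    have := card_pos.mpr ⟨D', hmem⟩
    omega
  -- every element has a leaf outside the root district
  have hleaf : ∀ j : Fin n, ∃ l, V2.v j l ∉ Dr := by
    intro j
    by_contra hcon
    push_neg at hcon
    have h1 : d ≤ cnt (C2.a j) Dr := cnt_a_ge hcon
    have h2 := (winsIn_iff.mp hwinDr') (C2.a j) (by simp)
    have h3 := cnt_p_le (Dr := Dr)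
    have h4 : (univ.filter fun i : Fin d => V2.w i ∈ Dr).card ≤ d := by
      have := card_filter_le (univ : Finset (Fin d)) (fun i => V2.w i ∈ Dr)
      rwa [card_univ, Fintype.card_fin] at this
    have h5 : (univ.filter fun i : Fin d => V2.w i ∈ Dr).card = d := by omega
    have hallw : ∀ i : Fin d, V2.w i ∈ Dr := by
      intro i
      have hequniv : (univ.filter fun i : Fin d => V2.w i ∈ Dr) = univ := by
        apply Finset.eq_of_subset_of_card_le (filter_subset _ _)
        rw [card_univ, Fintype.card_fin, h5]
      have : i ∈ univ.filter fun i : Fin d => V2.w i ∈ Dr := by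
        rw [hequniv]; exact mem_univ _
      exact (mem_filter.mp this).2
    have hWsub1 : Wp ⊆ {Dr} := by
      intro D hD
      rcases hwon D hD with rfl | ⟨i, h1', h2', h3'⟩
      · exact mem_singleton_self _
      · exact absurd (hallw i) h3'
    have hW1 : Wp.card ≤ 1 := by
      have := card_le_card hWsub1
      simpa using this
    omega
  -- the p-free districts
  set Z := P.filter (fun D => V2.root ∉ D ∧ ∀ i : Fin d, V2.w i ∉ D ∧ V2.w' i ∉ D)
    with hZ
  have hZt : Z.card ≤ t := by
    set T := insert Dr (E ∪ Wp.erase Dr) with hT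
    have hDrnot : Dr ∉ E ∪ Wp.erase Dr := by
      rw [mem_union]
      rintro (h | h)
      · rw [hE, mem_image] at h
        obtain ⟨i, hi, hEq⟩ := h
        exact hEdroot i hi (hEq ▸ hroot)
      · exact notMem_erase _ _ h
    have hdisjEW : Disjoint E (Wp.erase Dr) := by
      rw [Finset.disjoint_left]
      intro D hDE hDW
      rw [hE, mem_image] at hDE
      obtain ⟨i, hi, rfl⟩ := hDE
      have := mem_of_mem_erase hDW
      rw [hWp, mem_filter] at this
      exact hEdnowin i hi this.2
    have hTcard : T.card = 1 + (E.card + (Wp.card - 1)) := by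
      rw [hT, card_insert_of_notMem hDrnot, card_union_of_disjoint hdisjEW,
        card_erase_of_mem hwinDr]
      omega
    have hTP : T ⊆ P := by
      rw [hT]
      intro D hD
      rw [mem_insert, mem_union] at hD
      rcases hD with rfl | hD | hD
      · exact hDrP
      · rw [hE, mem_image] at hD
        obtain ⟨i, -, rfl⟩ := hD
        exact hEdP i
      · have := mem_of_mem_erase hD
        rw [hWp] at this
        exact mem_of_mem_filter _ this
    have hdisjTZ : Disjoint T Z := by
      rw [Finset.disjoint_left]
      intro D hDT hDZ
      rw [hZ, mem_filter] at hDZ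
      obtain ⟨-, hZr, hZw⟩ := hDZ
      rw [hT, mem_insert, mem_union] at hDT
      rcases hDT with rfl | hDT | hDT
      · exact hZr hroot
      · rw [hE, mem_image] at hDT
        obtain ⟨i, -, rfl⟩ := hDT
        exact (hZw i).2 (hEdmem i)
      · have hDW := mem_of_mem_erase hDT
        have hDne := ne_of_mem_erase hDT
        rcases hwon D hDW with rfl | ⟨i, rfl, -, -⟩
        · exact hDne rfl
        · exact (hZw i).1 (mem_singleton_self _)
    have hcardsum : T.card + Z.card ≤ P.card := by
      rw [← card_union_of_disjoint hdisjTZ]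
      exact card_le_card (union_subset hTP (by rw [hZ]; exact filter_subset _ _))
    rw [hTcard, hEcard, hcard] at hcardsum
    omega
  -- the cover
  set X := univ.filter
    (fun i : Fin m => ∃ D ∈ Z, ∃ x ∈ D, beta att x = some (Sum.inr i)) with hX
  have hXcard : X.card ≤ Z.card := by
    have hch : ∀ i : Fin m, ∃ D, i ∈ X → (D ∈ Z ∧ ∃ x ∈ D, beta att x = some (Sum.inr i)) := by
      intro i
      by_cases hi : i ∈ X
      · rw [hX, mem_filter] at hi
        obtain ⟨-, D, hD, hx⟩ := hi
        exact ⟨D, fun _ => ⟨hD, hx⟩⟩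
      · exact ⟨∅, fun h => absurd h hi⟩
    choose f hf using hch
    apply card_le_card_of_injOn f
    · intro i hi
      exact (hf i hi).1
    · intro i hi i' hi' hgg
      obtain ⟨hfZ, x, hxf, hbx⟩ := hf i (by simpa using hi)
      obtain ⟨hfZ', x', hxf', hbx'⟩ := hf i' (by simpa using hi')
      rw [hZ, mem_filter] at hfZ'
      obtain ⟨hfP', hfr', -⟩ := hfZ'
      rw [hgg] at hxf
      have hbb := hbranch hfP' hfr' hxf hxf'
      rw [hbx, hbx'] at hbb
      simpa using hbb
  refine ⟨X, le_trans hXcard hZt, ?_⟩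
  intro j
  obtain ⟨l, hl⟩ := hleaf j
  set D := dist (V2.v j l) with hDdef
  have hDP : D ∈ P := hdistP _
  have hvD : V2.v j l ∈ D := hdistmem _
  have hrD : V2.root ∉ D := by
    intro hr
    exact hl ((huniq hDP hDrP hr hroot) ▸ hvD)
  have hDZ : D ∈ Z := by
    rw [hZ, mem_filter]
    refine ⟨hDP, hrD, ?_⟩
    intro i
    constructor
    · intro hw
      have := hbranch hDP hrD hw hvD
      simp [beta] at this
    · intro hw
      have := hbranch hDP hrD hw hvD
      simp [beta] at this
  refine ⟨att j l, ?_, hattmem j l⟩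
  rw [hX, mem_filter]
  exact ⟨mem_univ _, D, hDZ, V2.v j l, hvD, rfl⟩

end BackwardMain


lemma att_surj {n m d : ℕ} {att : Fin n → Fin d → Fin m} {S : Fin m → Finset (Fin n)}
    (hfreq : ∀ j : Fin n, (Finset.univ.filter fun i => j ∈ S i).card = d)
    (hattmem : ∀ j l, j ∈ S (att j l))
    (hattinj : ∀ j, Function.Injective (att j))
    (j : Fin n) (i : Fin m) (hji : j ∈ S i) : ∃ l, att j l = i := by
  have h1 : (univ.image (att j)) ⊆ univ.filter (fun i => j ∈ S i) := by
    intro i' hi'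
    rw [mem_image] at hi'
    obtain ⟨l, -, rfl⟩ := hi'
    exact mem_filter.mpr ⟨mem_univ _, hattmem j l⟩
  have h2 : univ.filter (fun i => j ∈ S i) = univ.image (att j) := by
    apply (Finset.eq_of_subset_of_card_le h1 ?_).symm
    rw [hfreq j, card_image_of_injective _ (hattinj j), card_univ, Fintype.card_fin]
  have : i ∈ univ.image (att j) := by
    rw [← h2, mem_filter]
    exact ⟨mem_univ _, hji⟩
  rw [mem_image] at this
  obtain ⟨l, -, hl⟩ := this
  exact ⟨l, hl⟩

end Depth2Aux

/-- the reduction of Theorem 1.  Let `(U, F, t)` be a Set Cover instance in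
which every element belongs to exactly `d ≥ 3` sets.  Then there exists `X ⊆ F` with
`|X| ≤ t` and `∪_{S ∈ X} S = U` iff the depth-2 gerrymandering instance constructed from
`(U, F, t)` admits a district-partition into `k = t + 3` districts that is satisfying for the
preferred candidate `p`. -/
theorem depth2_cover_iff_gerrymander (n m d t : ℕ) (hd : 3 ≤ d) (htm : t ≤ m)
    (S : Fin m → Finset (Fin n))
    (hfreq : ∀ j : Fin n, (Finset.univ.filter fun i => j ∈ S i).card = d)
    (att : Fin n → Fin d → Fin m)
    (hattmem : ∀ j l, j ∈ S (att j l))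
    (hattinj : ∀ j, Function.Injective (att j)) :
    (∃ X : Finset (Fin m), X.card ≤ t ∧ ∀ j : Fin n, ∃ i ∈ X, j ∈ S i) ↔
      (∃ P : Finset (Finset (V2 n m d)),
        IsDistrictPartition (G2 att) (t + 3) P ∧ SatisfyingFor chi2 C2.p P) := by
  constructor
  · rintro ⟨X, hXc, hXcov⟩
    obtain ⟨X', hXX', hX't⟩ := Finset.exists_superset_card_eq hXc
      (by rw [Fintype.card_fin]; exact htm)
    have hl : ∀ j : Fin n, ∃ l, att j l ∈ X' := by
      intro j
      obtain ⟨i, hi, hji⟩ := hXcov j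
      obtain ⟨l, rfl⟩ := Depth2Aux.att_surj hfreq hattmem hattinj j i hji
      exact ⟨l, hXX' hi⟩
    obtain ⟨h1, h2⟩ := Depth2Aux.forward_main (i0 := ⟨0, by omega⟩) hd hattinj hX't hl
    exact ⟨_, h1, h2⟩
  · rintro ⟨P, hP, hS⟩
    exact Depth2Aux.backward_main hd S hattmem hP hS
end

section
/- In the subdivided-star gerrymandering instance constructed from a Set Cover instance (U,F,t): in any district-partition 𝒟 of G into k = t+4 districts that is satisfying for the preferred candidate p, the district of 𝒟 containing c_1 is the singleton {c_1} and the district containing c_2 is the singleton {c_2}. -/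
attribute [local instance] Classical.propDecidable

/-- Vertices of the subdivided-star gerrymandering instance: the root `r`; branch 1 vertices
`c_1, c_2, u_1, …, u_n`; branch 2 vertices `w_1, …, w_{t-1}`; and, on each of the `t`
selection branches `s`, the initial vertices `v_0^1, …, v_0^n` (constructor `v0`), the group
vertices `x_i` and `v_i^j` for `i ∈ [m]` (group `g_i`), and the final vertices
`y_0, …, y_m`. -/
inductive VS (n m t : ℕ) : Type where
  | root
  | c1
  | c2
  | u (j : Fin n)
  | w (i : Fin (t - 1))
  | v0 (s : Fin t) (j : Fin n)
  | x (s : Fin t) (i : Fin m)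
  | v (s : Fin t) (i : Fin m) (j : Fin n)
  | y (s : Fin t) (i : Fin (m + 1))
  deriving DecidableEq, Fintype

/-- Candidates of the subdivided-star instance: the preferred candidate `p`, the ally `q`,
element candidates `a_j` for `j ∈ [n]`, and branch candidates `b_s` for `s ∈ [t]`. -/
inductive CS (n t : ℕ) : Type where
  | p
  | q
  | a (j : Fin n)
  | b (s : Fin t)
  deriving DecidableEq

/-- Candidate preferences of the subdivided-star instance. -/
def chiS {n m t : ℕ} : VS n m t → CS n t
  | .root => .q
  | .c1 => .p
  | .c2 => .p
  | .u j => .a j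
  | .w _ => .q
  | .v0 _ j => .a j
  | .x _ _ => .q
  | .v _ _ j => .a j
  | .y s _ => .b s

/-- Position of each non-root vertex along its branch, as a pair
(branch index, 0-based distance from the root along the branch minus one); the vertex at
position 0 of each branch is adjacent to the root.  Branch 0 is `c_1, c_2, u_1, …, u_n`;
branch 1 is `w_1, …, w_{t-1}`; branch `2 + s` is selection branch `s`, ordered as
`v_0^1, …, v_0^n`, then groups `g_1, …, g_m` (group `g_i` consists of the vertices `v_i^j`
with `e_j ∉ S_i` in increasing order of `j`, then `x_i`, then the vertices `v_i^j` with
`e_j ∈ S_i` in increasing order of `j`), then `y_0, …, y_m`. -/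
def posS {n m t : ℕ} (S : Fin m → Finset (Fin n)) : VS n m t → Option (ℕ × ℕ)
  | .root => none
  | .c1 => some (0, 0)
  | .c2 => some (0, 1)
  | .u j => some (0, 2 + (j : ℕ))
  | .w i => some (1, (i : ℕ))
  | .v0 s j => some (2 + (s : ℕ), (j : ℕ))
  | .x s i => some (2 + (s : ℕ), n + (i : ℕ) * (n + 1) + (n - (S i).card))
  | .v s i j => some (2 + (s : ℕ), n + (i : ℕ) * (n + 1) +
      (if j ∈ S i then n - (S i).card + 1 + ((S i).filter fun j' => j' < j).card
       else ((S i)ᶜ.filter fun j' => j' < j).card))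
  | .y s i => some (2 + (s : ℕ), n + m * (n + 1) + (i : ℕ))

/-- The subdivided star: the root is adjacent to the vertex at position 0 of each branch, and
vertices at consecutive positions of the same branch are adjacent. -/
def GS {n m t : ℕ} (S : Fin m → Finset (Fin n)) : SimpleGraph (VS n m t) :=
  SimpleGraph.fromRel (fun a b =>
    (a = VS.root ∧ ∃ br, posS S b = some (br, 0)) ∨
    (∃ br k, posS S a = some (br, k) ∧ posS S b = some (br, k + 1)))

noncomputable def cnt {V C : Type*} (χ : V → C) (c : C) (D : Finset V) : ℕ :=
  (D.filter fun x => χ x = c).card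

lemma cnt_pos {V C : Type*} (χ : V → C) {D : Finset V} {x : V} (hx : x ∈ D) :
    0 < cnt χ (χ x) D :=
  Finset.card_pos.2 ⟨x, Finset.mem_filter.2 ⟨hx, rfl⟩⟩

lemma chiS_eq_p {n m t : ℕ} (x : VS n m t) : chiS x = CS.p ↔ x = VS.c1 ∨ x = VS.c2 := by
  cases x <;> simp [chiS]

lemma exists_leader {V C : Type*} (χ : V → C) (D : Finset V) (hD : D.Nonempty) :
    ∃ c, leadsIn χ c D := by
  obtain ⟨c, hc, hmax⟩ := Finset.exists_max_image (D.image χ)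
      (fun c => (D.filter fun x => χ x = c).card) (hD.image χ)
  refine ⟨c, fun c' => ?_⟩
  by_cases h : c' ∈ D.image χ
  · exact hmax c' h
  · have he : (D.filter fun x => χ x = c') = ∅ := by
      rw [Finset.filter_eq_empty_iff]
      intro x hx hxc
      exact h (hxc ▸ Finset.mem_image_of_mem χ hx)
    simp [he]

lemma wins_mem {n m t : ℕ} {D : Finset (VS n m t)} (hne : D.Nonempty)
    (hw : winsIn chiS CS.p D) : VS.c1 ∈ D ∨ VS.c2 ∈ D := by
  by_contra hcon
  push_neg at hcon
  obtain ⟨x, hx⟩ := hne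
  have hxp : chiS x ≠ CS.p := fun h => by
    rcases (chiS_eq_p x).1 h with h' | h'
    exacts [hcon.1 (h' ▸ hx), hcon.2 (h' ▸ hx)]
  have hp0 : cnt chiS CS.p D = 0 := by
    unfold cnt
    rw [Finset.card_eq_zero, Finset.eq_empty_iff_forall_notMem]
    intro y hy
    simp only [Finset.mem_filter] at hy
    obtain ⟨hyD, hyp⟩ := hy
    rcases (chiS_eq_p y).1 hyp with h' | h'
    exacts [hcon.1 (h' ▸ hyD), hcon.2 (h' ▸ hyD)]
  have h3 : cnt chiS (chiS x) D < cnt chiS CS.p D := hw (chiS x) hxp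
  have h4 := cnt_pos chiS hx
  omega

lemma won_singleton {n m t : ℕ} {z w : VS n m t}
    (hzw : ∀ x : VS n m t, chiS x = CS.p ↔ x = z ∨ x = w)
    {D : Finset (VS n m t)} (hw : winsIn chiS CS.p D)
    (ha : z ∈ D) (hb : w ∉ D) : D = {z} := by
  have hf : cnt chiS CS.p D = 1 := by
    unfold cnt
    rw [Finset.card_eq_one]
    refine ⟨z, ?_⟩
    ext x
    simp only [Finset.mem_filter, Finset.mem_singleton, hzw]
    constructor
    · rintro ⟨hxD, (rfl | rfl)⟩
      · rfl
      · exact absurd hxD hb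
    · rintro rfl; exact ⟨ha, Or.inl rfl⟩
  ext x
  simp only [Finset.mem_singleton]
  refine ⟨fun hxD => ?_, fun h => h ▸ ha⟩
  by_contra hx1
  have hxp : chiS x ≠ CS.p := fun h => by
    rcases (hzw x).1 h with h' | h'
    exacts [hx1 h', hb (h' ▸ hxD)]
  have h3 : cnt chiS (chiS x) D < cnt chiS CS.p D := hw (chiS x) hxp
  have h4 := cnt_pos chiS hxD
  omega

/-- In the subdivided-star gerrymandering instance constructed from a Set
Cover instance `(U, F, t)`: in any district-partition `𝒟` of `G` into `k = t + 4` districts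
that is satisfying for the preferred candidate `p`, the district of `𝒟` containing `c_1` is
the singleton `{c_1}` and the district containing `c_2` is the singleton `{c_2}`. -/
theorem star_c1_c2_singletons (n m t : ℕ) (htm : t ≤ m)
    (S : Fin m → Finset (Fin n))
    (hcov : ∀ j : Fin n, ∃ i : Fin m, j ∈ S i)
    (P : Finset (Finset (VS n m t)))
    (hP : IsDistrictPartition (GS S) (t + 4) P)
    (hsat : SatisfyingFor chiS CS.p P) :
    (∀ D ∈ P, VS.c1 ∈ D → D = {VS.c1}) ∧ (∀ D ∈ P, VS.c2 ∈ D → D = {VS.c2}) := by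
  classical
  obtain ⟨hcard, hne, hdisj, hcover, hconn⟩ := hP
  set W := P.filter (fun D => winsIn chiS CS.p D) with hW
  have hWP : W ⊆ P := Finset.filter_subset _ _
  set g : Finset (VS n m t) → VS n m t := fun D => if VS.c1 ∈ D then VS.c1 else VS.c2 with hg
  have hgmem : ∀ D ∈ W, g D ∈ D := by
    intro D hD
    obtain ⟨hDP, hwD⟩ := Finset.mem_filter.1 hD
    by_cases h1 : VS.c1 ∈ D
    · simpa [g, h1] using h1
    · rcases wins_mem (hne D hDP) hwD with h | h
      · exact absurd h h1
      · simpa [g, h1] using h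
  have hgrange : ∀ D ∈ W, g D ∈ ({VS.c1, VS.c2} : Finset (VS n m t)) := by
    intro D _
    by_cases h1 : VS.c1 ∈ D <;> simp [g, h1]
  have hginj : Set.InjOn g W := by
    intro D1 h1 D2 h2 hgeq
    by_contra hne'
    have hd := hdisj D1 (hWP h1) D2 (hWP h2) hne'
    exact (Finset.disjoint_left.1 hd (hgmem D1 h1)) (hgeq ▸ hgmem D2 h2)
  have hWle : W.card ≤ 2 := by
    have h := Finset.card_le_card_of_injOn g hgrange hginj
    simpa using h
  have hex : ∃ D ∈ P, ¬ winsIn chiS CS.p D := by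
    by_contra h
    push_neg at h
    have hsub : P ⊆ W := fun D hD => Finset.mem_filter.2 ⟨hD, h D hD⟩
    have := Finset.card_le_card hsub
    omega
  obtain ⟨D0, hD0P, hD0w⟩ := hex
  obtain ⟨c, hc⟩ := exists_leader chiS D0 (hne D0 hD0P)
  have hled : ∃ c', c' ≠ CS.p ∧ leadsIn chiS c' D0 := by
    by_cases hcp : c = CS.p
    · subst hcp
      rw [winsIn] at hD0w
      push_neg at hD0w
      obtain ⟨c', hc'ne, hc'ge⟩ := hD0w
      exact ⟨c', hc'ne, fun c'' => le_trans (hc c'') hc'ge⟩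
    · exact ⟨c, hcp, hc⟩
  obtain ⟨c', hc'p, hc'lead⟩ := hled
  have hsat' := hsat c' hc'p
  rw [← hW] at hsat'
  have h1le : 1 ≤ (P.filter fun D => leadsIn chiS c' D).card :=
    Finset.card_pos.2 ⟨D0, Finset.mem_filter.2 ⟨hD0P, hc'lead⟩⟩
  have hW2 : W.card = 2 := by omega
  have himg : W.image g = {VS.c1, VS.c2} := by
    apply Finset.eq_of_subset_of_card_le
    · intro x hx
      obtain ⟨D, hD, rfl⟩ := Finset.mem_image.1 hx
      exact hgrange D hD
    · rw [Finset.card_image_of_injOn hginj, hW2]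
      simp
  have hc1 : ∃ D1 ∈ W, g D1 = VS.c1 := by
    have h : VS.c1 ∈ W.image g := by rw [himg]; simp
    simpa [Finset.mem_image] using h
  have hc2 : ∃ D2 ∈ W, g D2 = VS.c2 := by
    have h : VS.c2 ∈ W.image g := by rw [himg]; simp
    simpa [Finset.mem_image] using h
  obtain ⟨D1, hD1W, hgD1⟩ := hc1
  obtain ⟨D2, hD2W, hgD2⟩ := hc2
  have hc1D1 : VS.c1 ∈ D1 := hgD1 ▸ hgmem D1 hD1W
  have hc2D2 : VS.c2 ∈ D2 := hgD2 ▸ hgmem D2 hD2W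
  have hc1D2 : VS.c1 ∉ D2 := by
    intro h; simp [g, h] at hgD2
  have hD1ne : D1 ≠ D2 := fun h => hc1D2 (h ▸ hc1D1)
  have hc2D1 : VS.c2 ∉ D1 := fun h =>
    (Finset.disjoint_left.1 (hdisj D1 (hWP hD1W) D2 (hWP hD2W) hD1ne) h) hc2D2
  constructor
  · intro D hDP hc1D
    have hDeq : D = D1 := by
      by_contra hne'
      exact (Finset.disjoint_left.1 (hdisj D hDP D1 (hWP hD1W) hne') hc1D) hc1D1
    subst hDeq
    exact won_singleton chiS_eq_p (Finset.mem_filter.1 hD1W).2 hc1D hc2D1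
  · intro D hDP hc2D
    have hDeq : D = D2 := by
      by_contra hne'
      exact (Finset.disjoint_left.1 (hdisj D hDP D2 (hWP hD2W) hne') hc2D) hc2D2
    subst hDeq
    refine won_singleton (fun x => ?_) (Finset.mem_filter.1 hD2W).2 hc2D hc1D2
    rw [chiS_eq_p]; tauto
end

section
/- In the subdivided-star gerrymandering instance constructed from a Set Cover instance (U,F,t): in any district-partition 𝒟 of G in which {c_1} and {c_2} are singleton districts, for every j ∈ [n] the element candidate a_j leads the district of 𝒟 containing the vertex u_j. -/
attribute [local instance] Classical.propDecidable

lemma u_adj {n m t : ℕ} (S : Fin m → Finset (Fin n)) (j : Fin n) (z : VS n m t)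
    (h : (GS S).Adj (VS.u j) z) : z = VS.c2 ∨ ∃ j', z = VS.u j' := by
  rw [GS, SimpleGraph.fromRel_adj] at h
  obtain ⟨hne, h | h⟩ := h
  · rcases h with ⟨h0, _⟩ | ⟨br, kk, h1, h2⟩
    · simp [posS] at h0
    · simp only [posS, Option.some.injEq, Prod.mk.injEq] at h1
      obtain ⟨rfl, rfl⟩ := h1
      cases z <;> simp [posS, Prod.ext_iff] at h2 <;>
        first
        | (right; exact ⟨_, rfl⟩)
        | omega
  · rcases h with ⟨rfl, br, hb⟩ | ⟨br, kk, h1, h2⟩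
    · simp [posS] at hb
    · simp only [posS, Option.some.injEq, Prod.mk.injEq] at h2
      obtain ⟨rfl, hk⟩ := h2
      cases z <;> simp [posS, Prod.ext_iff] at h1 <;>
        first
        | (left; rfl)
        | (right; exact ⟨_, rfl⟩)
        | omega

/-- In the subdivided-star gerrymandering instance constructed from a Set
Cover instance `(U, F, t)`: in any district-partition `𝒟` of `G` in which `{c_1}` and `{c_2}`
are singleton districts, for every `j ∈ [n]` the element candidate `a_j` leads the district of
`𝒟` containing the vertex `u_j`. -/
theorem star_element_candidates_lead (n m t : ℕ) (htm : t ≤ m)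
    (S : Fin m → Finset (Fin n))
    (hcov : ∀ j : Fin n, ∃ i : Fin m, j ∈ S i)
    (k : ℕ) (P : Finset (Finset (VS n m t)))
    (hP : IsDistrictPartition (GS S) k P)
    (hc1 : ({VS.c1} : Finset (VS n m t)) ∈ P)
    (hc2 : ({VS.c2} : Finset (VS n m t)) ∈ P) :
    ∀ j : Fin n, ∀ D ∈ P, VS.u j ∈ D → leadsIn chiS (CS.a j) D := by
  obtain ⟨hcard, hnon, hdisj, hcover, hconn⟩ := hP
  intro j D hD hu
  have hDne : ({VS.c2} : Finset (VS n m t)) ≠ D := by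
    intro h
    rw [← h, Finset.mem_singleton] at hu
    exact absurd hu (by simp)
  have hc2D : VS.c2 ∉ D := fun hmem =>
    (Finset.disjoint_left.mp (hdisj _ hc2 _ hD hDne) (Finset.mem_singleton_self _)) hmem
  have hall : ∀ z ∈ D, ∃ j', z = VS.u j' := by
    intro z hz
    have hconnD := hconn D hD
    have key : ∀ (a b : {x // x ∈ (D : Set (VS n m t))})
        (_ : ((GS S).induce (D : Set (VS n m t))).Walk a b),
        (∃ j', a.1 = VS.u j') → ∃ j', b.1 = VS.u j' := by
      intro a b w
      induction w with
      | nil => exact id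
      | @cons a c b hadj _ ih =>
        rintro ⟨j', hj'⟩
        apply ih
        have hadj' : (GS S).Adj a.1 c.1 := hadj
        rw [hj'] at hadj'
        rcases u_adj S j' _ hadj' with hc | h
        · exact absurd (hc ▸ c.2) hc2D
        · exact h
    obtain ⟨wk⟩ := hconnD.preconnected ⟨VS.u j, hu⟩ ⟨z, hz⟩
    exact key _ _ wk ⟨j, rfl⟩
  intro c'
  have h1 : (@Finset.filter _ (fun x => chiS x = c') (fun a => Classical.propDecidable _) D).card ≤ 1 := by
    apply Finset.card_le_one.mpr
    intro x hx y hy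
    simp only [Finset.mem_filter] at hx hy
    obtain ⟨jx, rfl⟩ := hall x hx.1
    obtain ⟨jy, rfl⟩ := hall y hy.1
    have : (CS.a jx : CS n t) = CS.a jy := by
      rw [show chiS (VS.u jx) = (CS.a jx : CS n t) from rfl] at hx
      rw [show chiS (VS.u jy) = (CS.a jy : CS n t) from rfl] at hy
      rw [hx.2, hy.2]
    cases this; rfl
  have h2 : 1 ≤ (@Finset.filter _ (fun x => chiS x = CS.a j) (fun a => Classical.propDecidable _) D).card := by
    apply Finset.card_pos.mpr
    refine ⟨VS.u j, ?_⟩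
    simp only [Finset.mem_filter]
    exact ⟨hu, rfl⟩
  exact h1.trans h2
end
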